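/- arXiv:1601.07767 — 5 statements merged into one kernel-verified Lean document; each statement's English description precedes it below -/
import Mathlib

section
/- Let f(z) = z + a_{k+1} z^{k+1} + ... be a germ of holomorphic diffeomorphism at 0 ∈ ℂ tangent to the identity with a_{k+1} ≠ 0 for some k ≥ 1. Then f is not L-stable. -/
open Filter Topology

noncomputable section

/-- The pseudo-orbit of `p` under a set `S` of maps: all points obtained from `p`
by successively applying elements of `S`. -/
inductive PseudoOrbit (S : Set (ℂ → ℂ)) (p : ℂ) : ℂ → Prop
  | base : PseudoOrbit S p p
  | step {q : ℂ} {f : ℂ → ℂ} : PseudoOrbit S p q → f ∈ S → PseudoOrbit S p (f q)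

/-- A set of germs is `L`-stable if every neighborhood `U` of `0` contains a
sub-neighborhood `V` all of whose pseudo-orbits stay in `U`. -/
def LStableSet (S : Set (ℂ → ℂ)) : Prop :=
  ∀ U ∈ 𝓝 (0:ℂ), ∃ V ∈ 𝓝 (0:ℂ), V ⊆ U ∧ ∀ p ∈ V, ∀ q : ℂ, PseudoOrbit S p q → q ∈ U

/-- A set is closed off the origin if it is closed in some punctured neighborhood of `0`. -/
def ClosedOffOrigin (S : Set ℂ) : Prop :=
  ∃ W ∈ 𝓝 (0:ℂ), closure S ∩ (W \ {0}) ⊆ S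

/-- A germ is analytically linearizable if some local biholomorphism fixing `0`
conjugates it to its linear part `z ↦ f'(0)·z`. -/
def Linearizable (f : ℂ → ℂ) : Prop :=
  ∃ h : ℂ → ℂ, AnalyticAt ℂ h 0 ∧ h 0 = 0 ∧ deriv h 0 ≠ 0 ∧
    ∀ᶠ z in 𝓝 (0:ℂ), h (f z) = deriv f 0 * h z

/-- A germ is non-resonant if its multiplier is `e^{2πiλ}` with `λ` irrational. -/
def NonResonant (f : ℂ → ℂ) : Prop :=
  ∃ l : ℝ, Irrational l ∧ deriv f 0 = Complex.exp (2 * (Real.pi : ℂ) * Complex.I * (l : ℂ))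

/-- A set of germs is finite up to germ equality. -/
def GermFinite (S : Set (ℂ → ℂ)) : Prop :=
  ∃ F : Set (ℂ → ℂ), F.Finite ∧ ∀ f ∈ S, ∃ g ∈ F, f =ᶠ[𝓝 (0:ℂ)] g

/-- A set of germs is cyclic (up to germ equality) if it consists of the iterates of
a single element. -/
def GermCyclic (S : Set (ℂ → ℂ)) : Prop :=
  ∃ g ∈ S, ∀ f ∈ S, ∃ n : ℕ, f =ᶠ[𝓝 (0:ℂ)] g^[n]

/-- A (model of a) subgroup of `Diff(ℂ,0)`: a set of holomorphic germs fixing `0`,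
invertible at `0`, closed under composition and germ-inversion. -/
structure GermGroup where
  carrier : Set (ℂ → ℂ)
  analytic : ∀ f ∈ carrier, AnalyticAt ℂ f 0
  fixes_zero : ∀ f ∈ carrier, f 0 = 0
  deriv_ne : ∀ f ∈ carrier, deriv f 0 ≠ 0
  id_mem : id ∈ carrier
  comp_mem : ∀ f ∈ carrier, ∀ g ∈ carrier, f ∘ g ∈ carrier
  inv_mem : ∀ f ∈ carrier, ∃ g ∈ carrier,
    (∀ᶠ z in 𝓝 (0:ℂ), g (f z) = z) ∧ (∀ᶠ z in 𝓝 (0:ℂ), f (g z) = z)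

/-- A germ group is finitely generated if finitely many of its elements generate every
element (as a germ) by composition. -/
def GermGroup.FinitelyGenerated (G : GermGroup) : Prop :=
  ∃ T : Set (ℂ → ℂ), T.Finite ∧ T ⊆ G.carrier ∧
    ∀ f ∈ G.carrier, ∃ l : List (ℂ → ℂ), (∀ g ∈ l, g ∈ T) ∧
      f =ᶠ[𝓝 (0:ℂ)] l.foldr (· ∘ ·) id

open Metric

lemma iterate_analyticAt {f : ℂ → ℂ} (hf : AnalyticAt ℂ f 0) (hf0 : f 0 = 0) :
    ∀ n : ℕ, f^[n] 0 = 0 ∧ AnalyticAt ℂ (f^[n]) 0 := by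
  intro n
  induction n with
  | zero => exact ⟨rfl, analyticAt_id⟩
  | succ n ih =>
    rw [Function.iterate_succ']
    refine ⟨by simp [Function.comp, ih.1, hf0], ?_⟩
    exact (ih.1 ▸ hf).comp ih.2

lemma iterate_expansion {f h : ℂ → ℂ} {k : ℕ} (hf : AnalyticAt ℂ f 0) (hf0 : f 0 = 0)
    (hh : AnalyticAt ℂ h 0)
    (heq : ∀ᶠ z in 𝓝 (0:ℂ), f z = z + z ^ (k+2) * h z) :
    ∀ n : ℕ, ∃ H : ℂ → ℂ, AnalyticAt ℂ H 0 ∧ H 0 = n * h 0 ∧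
      ∀ᶠ z in 𝓝 (0:ℂ), f^[n] z = z + z ^ (k+2) * H z := by
  intro n
  induction n with
  | zero =>
    exact ⟨fun _ => 0, analyticAt_const, by simp, by simp⟩
  | succ n ih =>
    obtain ⟨H, HA, H0, Hev⟩ := ih
    have hit := iterate_analyticAt hf hf0 n
    refine ⟨fun z => H z + (1 + z ^ (k+1) * H z) ^ (k+2) * h (f^[n] z), ?_, ?_, ?_⟩
    · have hcomp : AnalyticAt ℂ (fun z => h (f^[n] z)) 0 := by
        have := (hit.1 ▸ hh).comp hit.2
        exact this
      exact HA.add ((((analyticAt_const.add ((analyticAt_id.pow _).mul HA)).pow _)).mul hcomp)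
    · simp [H0, hit.1]; ring
    · have htend : Tendsto (f^[n]) (𝓝 0) (𝓝 0) := by
        simpa [hit.1] using hit.2.continuousAt.tendsto
      filter_upwards [Hev, htend.eventually heq] with z h1 h2
      have hfac : f^[n] z = z * (1 + z ^ (k+1) * H z) := by rw [h1]; ring
      rw [Function.iterate_succ_apply', h2]
      set c := h (f^[n] z) with hc
      rw [hfac, mul_pow]
      ring

/-- a nontrivial germ tangent to the identity
(`f(z) = z + a_{k+1}z^{k+1} + ⋯`, `a_{k+1} ≠ 0`) is not `L`-stable
(for the cyclic group generated by `f` and a germ inverse `g`). -/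
theorem tangent_to_identity_not_LStable (f g : ℂ → ℂ)
    (hf : AnalyticAt ℂ f 0) (h0 : f 0 = 0) (h1 : deriv f 0 = 1)
    (hne : ¬ f =ᶠ[𝓝 (0:ℂ)] id)
    (hg : ∀ᶠ z in 𝓝 (0:ℂ), g (f z) = z ∧ f (g z) = z) :
    ¬ LStableSet {f, g} := by
  intro hL
  have hφa : AnalyticAt ℂ (fun z => f z - z) 0 := hf.sub analyticAt_id
  have hφne : ¬ ∀ᶠ z in 𝓝 (0:ℂ), f z - z = 0 := by
    intro hev
    exact hne (hev.mono fun z hz => by simpa [sub_eq_zero] using hz)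
  have hord : analyticOrderAt (fun z => f z - z) 0 ≠ ⊤ := fun ht => hφne (analyticOrderAt_eq_top.mp ht)
  obtain ⟨m, hm⟩ : ∃ m : ℕ, analyticOrderAt (fun z => f z - z) 0 = (m : ℕ∞) :=
    ⟨(analyticOrderAt (fun z => f z - z) 0).toNat, (ENat.coe_toNat hord).symm⟩
  obtain ⟨h, hh, hh0, heqa⟩ := hφa.analyticOrderAt_eq_natCast.mp hm
  have heqm : ∀ᶠ z in 𝓝 (0:ℂ), f z = z + z ^ m * h z := by
    filter_upwards [heqa] with z hz
    rw [sub_zero, smul_eq_mul] at hz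
    linear_combination hz
  have hm0 : m ≠ 0 := by
    rintro rfl
    have := heqm.self_of_nhds
    simp [h0] at this
    exact hh0 this.symm
  have hm1 : m ≠ 1 := by
    rintro rfl
    have hφev : (fun z => f z - z) =ᶠ[𝓝 (0:ℂ)] fun z => z * h z := by
      filter_upwards [heqm] with z hz; rw [hz]; ring
    have hd1 : deriv (fun z => f z - z) 0 = 0 := by
      have hD0 : HasDerivAt (fun z => f z - z) (deriv f 0 - 1) 0 := by
        exact hf.differentiableAt.hasDerivAt.sub (hasDerivAt_id' (0:ℂ))
      rw [hD0.deriv, h1]; ring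
    have hD : HasDerivAt (fun z : ℂ => z * h z) (1 * h 0 + 0 * deriv h 0) 0 :=
      (hasDerivAt_id (0:ℂ)).mul hh.differentiableAt.hasDerivAt
    have : deriv (fun z => f z - z) 0 = 1 * h 0 + 0 * deriv h 0 := by
      rw [hφev.deriv_eq, hD.deriv]
    rw [hd1] at this
    apply hh0
    simpa using this.symm
  obtain ⟨k, rfl⟩ : ∃ k, m = k + 2 := ⟨m - 2, by omega⟩
  have heq : ∀ᶠ z in 𝓝 (0:ℂ), f z = z + z ^ (k+2) * h z := heqm
  -- radius of analyticity
  obtain ⟨R, hR, hRan⟩ : ∃ R > 0, ∀ z ∈ Metric.ball (0:ℂ) R, AnalyticAt ℂ f z :=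
    Metric.eventually_nhds_iff_ball.mp hf.eventually_analyticAt
  obtain ⟨V, hV, hVU, hstab⟩ := hL (Metric.ball 0 R) (Metric.ball_mem_nhds 0 hR)
  obtain ⟨ρ, hρ0, hρV⟩ := Metric.mem_nhds_iff.mp hV
  have horbit : ∀ n, ∀ z ∈ Metric.ball (0:ℂ) ρ, f^[n] z ∈ Metric.ball (0:ℂ) R := by
    intro n z hz
    have hpo : PseudoOrbit {f, g} z (f^[n] z) := by
      induction n with
      | zero => exact PseudoOrbit.base
      | succ n ih =>
        rw [Function.iterate_succ_apply']
        exact ih.step (by simp)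
    exact hstab z (hρV hz) _ hpo
  have hdiff : ∀ n, ∀ z ∈ Metric.ball (0:ℂ) ρ, DifferentiableAt ℂ (f^[n]) z := by
    intro n
    induction n with
    | zero => intro z _; simpa using differentiableAt_id
    | succ n ih =>
      intro z hz
      rw [Function.iterate_succ']
      exact ((hRan _ (horbit n z hz)).differentiableAt).comp z (ih z hz)
  set s := ρ / 2 with hsdef
  have hs0 : 0 < s := by positivity
  have hsρ : s < ρ := by rw [hsdef]; linarith
  set C := (R + s) / s ^ (k+2) with hCdef
  have key : ∀ n : ℕ, (n : ℝ) * ‖h 0‖ ≤ C := by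
    intro n
    obtain ⟨H, HA, H0, Hev⟩ := iterate_expansion hf h0 hh heq n
    set F : ℂ → ℂ := fun z => if z = 0 then (n : ℂ) * h 0 else (f^[n] z - z) / z ^ (k+2)
      with hFdef
    have hFd : ∀ z ∈ Metric.ball (0:ℂ) ρ, DifferentiableAt ℂ F z := by
      intro z hz
      by_cases hz0 : z = 0
      · subst hz0
        have hFH : F =ᶠ[𝓝 (0:ℂ)] H := by
          filter_upwards [Hev] with w hw
          by_cases hw0 : w = 0
          · subst hw0; simp [hFdef, H0]
          · simp only [hFdef, if_neg hw0]
            field_simp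
            linear_combination hw
        exact HA.differentiableAt.congr_of_eventuallyEq hFH
      · have hev : F =ᶠ[𝓝 z] fun w => (f^[n] w - w) / w ^ (k+2) := by
          filter_upwards [eventually_ne_nhds hz0] with w hw
          simp [hFdef, if_neg hw]
        exact (((hdiff n z hz).sub differentiableAt_id).div (differentiableAt_id.pow _)
          (pow_ne_zero _ hz0)).congr_of_eventuallyEq hev
    have hcl : closure (Metric.ball (0:ℂ) s) ⊆ Metric.ball (0:ℂ) ρ := by
      rw [closure_ball _ (ne_of_gt hs0)]
      exact Metric.closedBall_subset_ball hsρ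
    have hmax : ‖F 0‖ ≤ C := by
      refine Complex.norm_le_of_forall_mem_frontier_norm_le Metric.isBounded_ball
        ⟨?_, ?_⟩ ?_ (subset_closure (Metric.mem_ball_self hs0))
      · intro z hz
        exact (hFd z (hcl (subset_closure hz))).differentiableWithinAt
      · intro z hz
        exact (hFd z (hcl hz)).continuousAt.continuousWithinAt
      · intro z hz
        rw [frontier_ball _ (ne_of_gt hs0)] at hz
        have hzn : ‖z‖ = s := by simpa using hz
        have hz0 : z ≠ 0 := by
          intro h'; rw [h'] at hzn; simp at hzn; linarith
        have hzρ : z ∈ Metric.ball (0:ℂ) ρ := by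
          rw [Metric.mem_ball, dist_zero_right, hzn]; exact hsρ
        have hfr := horbit n z hzρ
        rw [Metric.mem_ball, dist_zero_right] at hfr
        simp only [hFdef, if_neg hz0]
        rw [norm_div, norm_pow, hzn, hCdef]
        gcongr
        calc ‖f^[n] z - z‖ ≤ ‖f^[n] z‖ + ‖z‖ := norm_sub_le _ _
          _ ≤ R + s := by rw [hzn]; exact add_le_add hfr.le le_rfl
    have hF0 : ‖F 0‖ = (n : ℝ) * ‖h 0‖ := by
      simp [hFdef]
    linarith [hF0 ▸ hmax]
  have hhn : 0 < ‖h 0‖ := norm_pos_iff.mpr hh0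
  obtain ⟨n, hn⟩ := exists_nat_gt (C / ‖h 0‖)
  have hkey := key n
  rw [div_lt_iff₀ hhn] at hn
  linarith
end
end

section
/- Let G ⊆ Diff(ℂ,0) be a finitely generated L-stable subgroup. Then G is either finite cyclic, or G is an abelian analytically linearizable group containing an element conjugate to an irrational rotation z ↦ e^{2πiλ}z with λ ∈ ℝ \ ℚ (circle type). -/
open Filter Topology

noncomputable section

lemma LS_stab_ball {S : Set (ℂ → ℂ)} (h : LStableSet S) {ε : ℝ} (hε : 0 < ε) :
    ∃ δ : ℝ, 0 < δ ∧ δ ≤ ε ∧ ∀ p : ℂ, ‖p‖ < δ → ∀ q, PseudoOrbit S p q → ‖q‖ < ε := by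
  obtain ⟨V, hV, -, horb⟩ := h (Metric.ball 0 ε) (Metric.ball_mem_nhds _ hε)
  obtain ⟨δ₀, hδ₀, hball⟩ := Metric.mem_nhds_iff.1 hV
  refine ⟨min δ₀ ε, lt_min hδ₀ hε, min_le_right _ _, fun p hp q hq => ?_⟩
  have hpV : p ∈ V := hball (by
    simpa [Metric.mem_ball, dist_zero_right] using lt_of_lt_of_le hp (min_le_left _ _))
  simpa [Metric.mem_ball, dist_zero_right] using horb p hpV q hq

lemma LS_orbit_iterate {S : Set (ℂ → ℂ)} {f : ℂ → ℂ} (hf : f ∈ S) (p : ℂ) :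
    ∀ n : ℕ, PseudoOrbit S p (f^[n] p)
  | 0 => PseudoOrbit.base
  | (n+1) => by
      rw [Function.iterate_succ_apply']
      exact PseudoOrbit.step (LS_orbit_iterate hf p n) hf

lemma LS_deriv_comp {f g : ℂ → ℂ} (hf : DifferentiableAt ℂ f 0) (hg : DifferentiableAt ℂ g 0)
    (hg0 : g 0 = 0) : deriv (fun z => f (g z)) 0 = deriv f 0 * deriv g 0 := by
  have h := deriv_comp (0:ℂ) (show DifferentiableAt ℂ f (g 0) by rwa [hg0]) hg
  simp only [Function.comp_def] at h
  rw [h, hg0]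

lemma LS_iter_zero {f : ℂ → ℂ} (hf0 : f 0 = 0) (n : ℕ) : f^[n] 0 = 0 :=
  Function.iterate_fixed hf0 n

lemma LS_iter_analyticAt {f : ℂ → ℂ} (hf : AnalyticAt ℂ f 0) (hf0 : f 0 = 0) (n : ℕ) :
    AnalyticAt ℂ f^[n] 0 := by
  induction n with
  | zero => exact analyticAt_id
  | succ n ih =>
      rw [Function.iterate_succ']
      exact AnalyticAt.comp (by rwa [LS_iter_zero hf0]) ih

lemma LS_iter_deriv {f : ℂ → ℂ} (hf : AnalyticAt ℂ f 0) (hf0 : f 0 = 0) (n : ℕ) :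
    deriv f^[n] 0 = (deriv f 0) ^ n := by
  induction n with
  | zero => simp
  | succ n ih =>
      rw [Function.iterate_succ']
      have h2 := (LS_iter_analyticAt hf hf0 n).differentiableAt
      rw [show (f ∘ f^[n]) = fun z => f (f^[n] z) from rfl,
        LS_deriv_comp hf.differentiableAt h2 (LS_iter_zero hf0 n), ih, pow_succ]
      ring

lemma LS_analytic_ball {f : ℂ → ℂ} (hf : AnalyticAt ℂ f 0) :
    ∃ ρ : ℝ, 0 < ρ ∧ ∀ z : ℂ, ‖z‖ < ρ → AnalyticAt ℂ f z := by
  have h := hf.eventually_analyticAt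
  rw [Metric.eventually_nhds_iff] at h
  obtain ⟨ε, hε, h⟩ := h
  exact ⟨ε, hε, fun z hz => h (by simpa [dist_zero_right] using hz)⟩
lemma LS_escape {S : Set (ℂ → ℂ)} {f : ℂ → ℂ} (hS : LStableSet S) (hf : f ∈ S)
    (han : AnalyticAt ℂ f 0) (hf0 : f 0 = 0) (ha : 1 < ‖deriv f 0‖) : False := by
  set a := deriv f 0 with ha_def
  set c : ℝ := (1 + ‖a‖) / 2 with hc_def
  have hc1 : 1 < c := by rw [hc_def]; linarith
  have hε : (0:ℝ) < (‖a‖ - 1) / 2 := by linarith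
  have hd : HasDerivAt f a 0 := han.differentiableAt.hasDerivAt
  have hlo := (hasDerivAt_iff_isLittleO.1 hd).bound hε
  have hev : ∀ᶠ z in 𝓝 (0:ℂ), c * ‖z‖ ≤ ‖f z‖ := by
    filter_upwards [hlo] with z hz
    rw [hf0] at hz
    simp only [sub_zero, smul_eq_mul, sub_zero] at hz
    have h1 : ‖z * a‖ ≤ ‖f z‖ + ‖f z - z * a‖ := by
      calc ‖z * a‖ = ‖f z - (f z - z * a)‖ := by ring_nf
        _ ≤ ‖f z‖ + ‖f z - z * a‖ := norm_sub_le _ _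
    have h2 : ‖z * a‖ = ‖a‖ * ‖z‖ := by rw [norm_mul]; ring
    have h3 : ‖f z - z * a‖ ≤ (‖a‖ - 1) / 2 * ‖z‖ := by
      simpa [mul_comm] using hz
    rw [hc_def]; nlinarith [norm_nonneg z]
  rw [Metric.eventually_nhds_iff] at hev
  obtain ⟨ρ, hρ, hest⟩ := hev
  have hest' : ∀ z : ℂ, ‖z‖ < ρ → c * ‖z‖ ≤ ‖f z‖ := fun z hz =>
    hest (by simpa [dist_zero_right] using hz)
  obtain ⟨δ, hδ, hδρ, hstab⟩ := LS_stab_ball hS hρ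
  set p : ℂ := ((δ/2 : ℝ) : ℂ) with hp_def
  have hpn : ‖p‖ = δ/2 := by
    rw [hp_def, Complex.norm_real, Real.norm_eq_abs, abs_of_pos (by linarith)]
  have hppos : 0 < ‖p‖ := by rw [hpn]; linarith
  have hpδ : ‖p‖ < δ := by rw [hpn]; linarith
  have horb : ∀ n : ℕ, ‖f^[n] p‖ < ρ := fun n =>
    hstab p hpδ _ (LS_orbit_iterate hf p n)
  have hgrow : ∀ n : ℕ, c ^ n * ‖p‖ ≤ ‖f^[n] p‖ := by
    intro n
    induction n with
    | zero => simp
    | succ n ih =>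
        rw [Function.iterate_succ_apply']
        calc c ^ (n+1) * ‖p‖ = c * (c ^ n * ‖p‖) := by ring
          _ ≤ c * ‖f^[n] p‖ := by
              have : (0:ℝ) < c := by linarith
              nlinarith
          _ ≤ ‖f (f^[n] p)‖ := hest' _ (horb n)
  obtain ⟨n, hn⟩ := pow_unbounded_of_one_lt (ρ / ‖p‖) hc1
  have h1 : ρ < c ^ n * ‖p‖ := by
    rw [div_lt_iff₀ hppos] at hn; linarith
  exact absurd (lt_of_le_of_lt (hgrow n) (horb n)) (by linarith)
lemma LS_hasSum_coeff {F : ℂ → ℂ} {q : FormalMultilinearSeries ℂ ℂ ℂ} {R : NNReal}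
    (hq : HasFPowerSeriesOnBall F q 0 R) {z : ℂ} (hz : ‖z‖ < (R:ℝ)) :
    HasSum (fun m => z ^ m * q.coeff m) (F z) := by
  have hz' : z ∈ Metric.eball (0:ℂ) (R : ENNReal) := by
    rw [Metric.mem_eball, edist_zero_right]
    exact_mod_cast (by exact_mod_cast hz : ‖z‖₊ < R)
  have := hq.hasSum hz'
  simp only [FormalMultilinearSeries.apply_eq_pow_smul_coeff, smul_eq_mul, zero_add] at this
  exact this

lemma LS_partial_approx {F : ℂ → ℂ} {q : FormalMultilinearSeries ℂ ℂ ℂ} {R : NNReal}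
    (hq : HasFPowerSeriesOnBall F q 0 R) {ρ : ℝ} (hρ : 0 ≤ ρ) (hR : 0 < (R:ℝ))
    (hb : ∀ m, ‖q.coeff m‖ * (R:ℝ) ^ m ≤ ρ)
    {z : ℂ} (hz : ‖z‖ ≤ (R:ℝ) / 2) (M : ℕ) :
    ‖F z - ∑ m ∈ Finset.range M, z ^ m * q.coeff m‖ ≤ 2 * ρ * (1/2) ^ M := by
  have hzR : ‖z‖ < (R:ℝ) := lt_of_le_of_lt hz (by linarith)
  have hsum := LS_hasSum_coeff hq hzR
  set g : ℕ → ℂ := fun m => z ^ m * q.coeff m with hg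
  have hterm : ∀ m, ‖g m‖ ≤ ρ * (1/2) ^ m := by
    intro m
    have h1 : ‖g m‖ = ‖z‖ ^ m * ‖q.coeff m‖ := by rw [hg]; simp [norm_mul, norm_pow]
    have h2 : ‖z‖ ^ m ≤ ((R:ℝ)/2) ^ m := pow_le_pow_left₀ (norm_nonneg _) hz m
    have h3 : ((R:ℝ)/2) ^ m = (R:ℝ)^m * (1/2)^m := by rw [div_pow, one_div_pow, div_eq_mul_one_div]
    have h4 : ‖q.coeff m‖ * (R:ℝ)^m ≤ ρ := hb m
    have h5 : (0:ℝ) < (R:ℝ)^m := pow_pos hR m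
    calc ‖g m‖ = ‖z‖ ^ m * ‖q.coeff m‖ := h1
      _ ≤ ((R:ℝ)/2)^m * ‖q.coeff m‖ := by
          apply mul_le_mul_of_nonneg_right h2 (norm_nonneg _)
      _ = (‖q.coeff m‖ * (R:ℝ)^m) * (1/2)^m := by rw [h3]; ring
      _ ≤ ρ * (1/2)^m := by
          apply mul_le_mul_of_nonneg_right h4 (by positivity)
  have hsummable : Summable g := hsum.summable
  have htail : F z = (∑ m ∈ Finset.range M, g m) + ∑' m, g (m + M) := by
    rw [← hsum.tsum_eq, ← Summable.sum_add_tsum_nat_add M hsummable]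
  rw [htail]
  have hnormbound : ‖∑' m, g (m + M)‖ ≤ ∑' (m:ℕ), ρ * (1/2)^M * (1/2)^m := by
    have hsb : Summable (fun m : ℕ => ρ * (1/2)^M * (1/2:ℝ)^m) :=
      (summable_geometric_of_lt_one (by norm_num) (by norm_num)).mul_left _
    have hsn : Summable fun m => ‖g (m + M)‖ := by
      apply Summable.of_nonneg_of_le (fun m => norm_nonneg _) _ hsb
      intro m
      calc ‖g (m + M)‖ ≤ ρ * (1/2)^(m+M) := hterm (m+M)
        _ = ρ * (1/2)^M * (1/2)^m := by rw [pow_add]; ring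
    calc ‖∑' m, g (m + M)‖ ≤ ∑' m, ‖g (m + M)‖ := norm_tsum_le_tsum_norm hsn
      _ ≤ ∑' (m:ℕ), ρ * (1/2)^M * (1/2)^m := by
          apply Summable.tsum_le_tsum _ hsn hsb
          intro m
          calc ‖g (m + M)‖ ≤ ρ * (1/2)^(m+M) := hterm (m+M)
            _ = ρ * (1/2)^M * (1/2)^m := by rw [pow_add]; ring
  have hgeom : ∑' (m:ℕ), ρ * (1/2)^M * (1/2:ℝ)^m = ρ * (1/2)^M * 2 := by
    rw [tsum_mul_left, tsum_geometric_of_lt_one (by norm_num) (by norm_num)]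
    norm_num
  calc ‖(∑ m ∈ Finset.range M, g m) + ∑' m, g (m + M) - ∑ m ∈ Finset.range M, g m‖
      = ‖∑' m, g (m + M)‖ := by rw [add_sub_cancel_left]
    _ ≤ ρ * (1/2)^M * 2 := by rw [← hgeom]; exact hnormbound
    _ = 2 * ρ * (1/2)^M := by ring
/-- The Cesàro averages `z ↦ N⁻¹ ∑_{n<N} a^{-n} f^[n](z)`. -/
def LSavg (a : ℂ) (f : ℂ → ℂ) (N : ℕ) (z : ℂ) : ℂ :=
  (N:ℂ)⁻¹ * ∑ n ∈ Finset.range N, a⁻¹^n * f^[n] z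

lemma LSavg_zero_eval {a : ℂ} {f : ℂ → ℂ} (hf0 : f 0 = 0) (N : ℕ) : LSavg a f N 0 = 0 := by
  unfold LSavg
  have h : ∀ n ∈ Finset.range N, a⁻¹^n * f^[n] (0:ℂ) = 0 := by
    intro n _; rw [LS_iter_zero hf0]; ring
  rw [Finset.sum_congr rfl h]
  simp

lemma LSavg_analyticAt {a : ℂ} {f : ℂ → ℂ} {z : ℂ} {N : ℕ}
    (h : ∀ n, AnalyticAt ℂ f^[n] z) : AnalyticAt ℂ (LSavg a f N) z := by
  unfold LSavg
  exact analyticAt_const.mul (Finset.analyticAt_fun_sum _ (fun n _ => analyticAt_const.mul (h n)))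

lemma LSavg_deriv {a : ℂ} {f : ℂ → ℂ} (han : AnalyticAt ℂ f 0) (hf0 : f 0 = 0)
    (ha : deriv f 0 = a) (ha0 : a ≠ 0) {N : ℕ} (hN1 : 1 ≤ N) :
    deriv (LSavg a f N) 0 = 1 := by
  unfold LSavg
  have hdiff : ∀ n ∈ Finset.range N, DifferentiableAt ℂ (fun z => a⁻¹^n * f^[n] z) 0 :=
    fun n _ => (differentiableAt_const _).mul (LS_iter_analyticAt han hf0 n).differentiableAt
  rw [deriv_const_mul _ (DifferentiableAt.fun_sum hdiff), deriv_fun_sum hdiff]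
  have h : ∀ n ∈ Finset.range N, deriv (fun z => a⁻¹^n * f^[n] z) 0 = 1 := by
    intro n _
    rw [deriv_const_mul _ (LS_iter_analyticAt han hf0 n).differentiableAt,
      LS_iter_deriv han hf0 n, ha, ← mul_pow, inv_mul_cancel₀ ha0, one_pow]
  rw [Finset.sum_congr rfl h, Finset.sum_const, Finset.card_range]
  have hNne : ((N:ℂ)) ≠ 0 := Nat.cast_ne_zero.2 (by omega)
  simp only [nsmul_eq_mul, mul_one]
  field_simp

lemma LSavg_feq {a : ℂ} {f : ℂ → ℂ} (ha0 : a ≠ 0) (N : ℕ) (z : ℂ) :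
    LSavg a f N (f z) = a * LSavg a f N z
      + (N:ℂ)⁻¹ * (a * (a⁻¹^N * f^[N] z) - a * z) := by
  unfold LSavg
  have h1 : ∀ n, a⁻¹^n * f^[n] (f z) = a * (a⁻¹^(n+1) * f^[n+1] z) := by
    intro n
    rw [← Function.iterate_succ_apply, pow_succ]
    field_simp
  have key : ∑ n ∈ Finset.range N, a⁻¹^n * f^[n] (f z)
      = a * (∑ n ∈ Finset.range N, a⁻¹^n * f^[n] z)
        + (a * (a⁻¹^N * f^[N] z) - a * (a⁻¹^0 * f^[0] z)) := by
    have e1 := Finset.sum_range_succ' (fun n => a⁻¹^n * f^[n] z) N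
    have e2 := Finset.sum_range_succ (fun n => a⁻¹^n * f^[n] z) N
    calc ∑ n ∈ Finset.range N, a⁻¹^n * f^[n] (f z)
        = ∑ n ∈ Finset.range N, a * (a⁻¹^(n+1) * f^[n+1] z) :=
          Finset.sum_congr rfl (fun n _ => h1 n)
      _ = a * ∑ n ∈ Finset.range N, a⁻¹^(n+1) * f^[n+1] z := by rw [Finset.mul_sum]
      _ = a * (∑ n ∈ Finset.range N, a⁻¹^n * f^[n] z)
          + (a * (a⁻¹^N * f^[N] z) - a * (a⁻¹^0 * f^[0] z)) := by
          have e3 : ∑ n ∈ Finset.range N, a⁻¹^(n+1) * f^[n+1] z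
              = (∑ n ∈ Finset.range N, a⁻¹^n * f^[n] z)
                + a⁻¹^N * f^[N] z - a⁻¹^0 * f^[0] z := by
            linear_combination e2 - e1
          rw [e3]; ring
  rw [key]
  simp only [pow_zero, Function.iterate_zero, id_eq, one_mul]
  ring

lemma LSavg_err {a : ℂ} {f : ℂ → ℂ} (ha0 : a ≠ 0) (hna : ‖a‖ = 1)
    {ρ δ : ℝ} {z : ℂ} (hz : ‖z‖ < δ) (hiter : ∀ n, ‖f^[n] z‖ < ρ) (N : ℕ) :
    ‖LSavg a f N (f z) - a * LSavg a f N z‖ ≤ (ρ + δ) / N := by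
  have hainv : ‖a⁻¹‖ = 1 := by rw [norm_inv, hna]; norm_num
  rw [LSavg_feq ha0 N z]
  rcases Nat.eq_zero_or_pos N with rfl | hNpos
  · simp
  have heq : a * LSavg a f N z + (N:ℂ)⁻¹ * (a * (a⁻¹^N * f^[N] z) - a * z)
      - a * LSavg a f N z = (N:ℂ)⁻¹ * (a * (a⁻¹^N * f^[N] z) - a * z) := by ring
  rw [heq, norm_mul]
  have h2 : ‖((N:ℂ))⁻¹‖ = (N:ℝ)⁻¹ := by rw [norm_inv, Complex.norm_natCast]
  rw [h2]
  have h3 : ‖a * (a⁻¹^N * f^[N] z) - a * z‖ ≤ ρ + δ := by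
    calc ‖a * (a⁻¹^N * f^[N] z) - a * z‖ ≤ ‖a * (a⁻¹^N * f^[N] z)‖ + ‖a * z‖ := norm_sub_le _ _
      _ = ‖f^[N] z‖ + ‖z‖ := by
          rw [norm_mul, norm_mul, norm_mul, norm_pow, hainv, hna]; ring
      _ ≤ ρ + δ := add_le_add (le_of_lt (hiter N)) (le_of_lt hz)
  rw [div_eq_inv_mul]
  exact mul_le_mul_of_nonneg_left h3 (by positivity)
lemma LS_coeff_bound {F : ℂ → ℂ} {R : NNReal} (hR : 0 < (R:ℝ)) {ρ : ℝ}
    (hcont : ContinuousOn F (Metric.sphere (0:ℂ) (R:ℝ)))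
    (hbd : ∀ z : ℂ, ‖z‖ = (R:ℝ) → ‖F z‖ ≤ ρ) (m : ℕ) :
    ‖(cauchyPowerSeries F 0 (R:ℝ)) m‖ * (R:ℝ)^m ≤ ρ := by
  have hρ0 : 0 ≤ ρ := le_trans (norm_nonneg _) (hbd ((R:ℝ):ℂ) (by
    simp [Complex.norm_real, abs_of_pos hR]))
  have hmem : ∀ θ : ℝ, circleMap 0 (R:ℝ) θ ∈ Metric.sphere (0:ℂ) (R:ℝ) := by
    intro θ
    simp [Metric.mem_sphere, dist_zero_right, norm_circleMap_zero,
      abs_of_pos hR]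
  have hcm : Continuous fun θ : ℝ => ‖F (circleMap 0 (R:ℝ) θ)‖ :=
    (hcont.comp_continuous (continuous_circleMap 0 _) hmem).norm
  have hnormcm : ∀ θ : ℝ, ‖F (circleMap 0 (R:ℝ) θ)‖ ≤ ρ := by
    intro θ
    apply hbd
    have := hmem θ
    simpa [Metric.mem_sphere, dist_zero_right] using this
  have hle : (∫ θ in (0:ℝ)..2*Real.pi, ‖F (circleMap 0 (R:ℝ) θ)‖) ≤ 2*Real.pi*ρ := by
    calc (∫ θ in (0:ℝ)..2*Real.pi, ‖F (circleMap 0 (R:ℝ) θ)‖)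
        ≤ ∫ _ in (0:ℝ)..2*Real.pi, ρ := by
          apply intervalIntegral.integral_mono_on Real.two_pi_pos.le
            (hcm.intervalIntegrable _ _) intervalIntegrable_const
          exact fun θ _ => hnormcm θ
      _ = 2*Real.pi*ρ := by
          rw [intervalIntegral.integral_const, smul_eq_mul]; ring
  have hest := norm_cauchyPowerSeries_le F 0 (R:ℝ) m
  have h2 : ((2*Real.pi)⁻¹ * ∫ θ in (0:ℝ)..2*Real.pi, ‖F (circleMap 0 (R:ℝ) θ)‖)
      ≤ ρ := by
    rw [inv_mul_le_iff₀ Real.two_pi_pos]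
    linarith [hle]
  have h3 : ‖(cauchyPowerSeries F 0 (R:ℝ)) m‖ ≤ ρ * (|(R:ℝ)|⁻¹)^m := by
    calc ‖(cauchyPowerSeries F 0 (R:ℝ)) m‖
        ≤ ((2*Real.pi)⁻¹ * ∫ θ in (0:ℝ)..2*Real.pi, ‖F (circleMap 0 (R:ℝ) θ)‖) * (|(R:ℝ)|⁻¹)^m :=
          hest
      _ ≤ ρ * (|(R:ℝ)|⁻¹)^m := by
          apply mul_le_mul_of_nonneg_right h2 (by positivity)
  rw [abs_of_pos hR] at h3
  calc ‖(cauchyPowerSeries F 0 (R:ℝ)) m‖ * (R:ℝ)^m ≤ (ρ * ((R:ℝ)⁻¹)^m) * (R:ℝ)^m := by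
        apply mul_le_mul_of_nonneg_right h3 (by positivity)
    _ = ρ := by rw [inv_pow, mul_assoc, inv_mul_cancel₀ (by positivity), mul_one]
lemma LS_linearize {S : Set (ℂ → ℂ)} {f : ℂ → ℂ} (hS : LStableSet S) (hf : f ∈ S)
    (han : AnalyticAt ℂ f 0) (hf0 : f 0 = 0) (hnorm : ‖deriv f 0‖ = 1) :
    ∃ h : ℂ → ℂ, AnalyticAt ℂ h 0 ∧ h 0 = 0 ∧ deriv h 0 = 1 ∧
      ∀ᶠ z in 𝓝 (0:ℂ), h (f z) = deriv f 0 * h z := by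
  set a := deriv f 0 with ha_def
  have ha0 : a ≠ 0 := by
    intro h; rw [h] at hnorm; simp at hnorm
  obtain ⟨ρ, hρ, hρan⟩ := LS_analytic_ball han
  obtain ⟨δ, hδ, hδρ, hstab⟩ := LS_stab_ball hS hρ
  have hit_in : ∀ z : ℂ, ‖z‖ < δ → ∀ n, ‖f^[n] z‖ < ρ := fun z hz n =>
    hstab z hz _ (LS_orbit_iterate hf z n)
  have hit_an : ∀ n, ∀ z : ℂ, ‖z‖ < δ → AnalyticAt ℂ f^[n] z := by
    intro n
    induction n with
    | zero => intro z _; exact analyticAt_id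
    | succ n ih =>
        intro z hz
        rw [Function.iterate_succ']
        exact AnalyticAt.comp (hρan _ (hit_in z hz n)) (ih z hz)
  have hN_an : ∀ N, ∀ z : ℂ, ‖z‖ < δ → AnalyticAt ℂ (LSavg a f N) z := fun N z hz =>
    LSavg_analyticAt (fun n => hit_an n z hz)
  have hainv : ‖a⁻¹‖ = 1 := by rw [norm_inv, hnorm]; norm_num
  have hN_bd : ∀ N, ∀ z : ℂ, ‖z‖ < δ → ‖LSavg a f N z‖ ≤ ρ := by
    intro N z hz
    unfold LSavg
    rcases Nat.eq_zero_or_pos N with rfl | hNpos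
    · simp; linarith
    have h1 : ‖∑ n ∈ Finset.range N, a⁻¹^n * f^[n] z‖ ≤ N * ρ := by
      calc ‖∑ n ∈ Finset.range N, a⁻¹^n * f^[n] z‖
          ≤ ∑ n ∈ Finset.range N, ‖a⁻¹^n * f^[n] z‖ := norm_sum_le _ _
        _ ≤ ∑ n ∈ Finset.range N, ρ := by
            apply Finset.sum_le_sum
            intro n _
            rw [norm_mul, norm_pow, hainv, one_pow, one_mul]
            exact le_of_lt (hit_in z hz n)
        _ = N * ρ := by rw [Finset.sum_const, Finset.card_range, nsmul_eq_mul]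
    have hNR : (0:ℝ) < N := by exact_mod_cast hNpos
    rw [norm_mul, norm_inv, Complex.norm_natCast]
    calc (N:ℝ)⁻¹ * ‖∑ n ∈ Finset.range N, a⁻¹^n * f^[n] z‖ ≤ (N:ℝ)⁻¹ * (N * ρ) :=
          mul_le_mul_of_nonneg_left h1 (by positivity)
      _ = ρ := by field_simp
  -- power series of the averages on the ball of radius δ/2
  set R : NNReal := ⟨δ/2, le_of_lt (half_pos hδ)⟩ with hR_def
  have hRr : (R : ℝ) = δ/2 := rfl
  have hRpos : (0:ℝ) < (R:ℝ) := by rw [hRr]; linarith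
  have hRpos' : 0 < R := by exact_mod_cast hRpos
  have hRδ : (R:ℝ) < δ := by rw [hRr]; linarith
  have hdiffOn : ∀ N, DifferentiableOn ℂ (LSavg a f N) (Metric.closedBall 0 (R:ℝ)) := by
    intro N z hz
    rw [Metric.mem_closedBall, dist_zero_right] at hz
    exact ((hN_an N z (lt_of_le_of_lt hz hRδ)).differentiableAt).differentiableWithinAt
  have hps : ∀ N, HasFPowerSeriesOnBall (LSavg a f N)
      (cauchyPowerSeries (LSavg a f N) 0 (R:ℝ)) 0 R :=
    fun N => (hdiffOn N).hasFPowerSeriesOnBall hRpos'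
  set pN : ℕ → FormalMultilinearSeries ℂ ℂ ℂ :=
    fun N => cauchyPowerSeries (LSavg a f N) 0 (R:ℝ) with hpN_def
  have hcoeff_bd : ∀ N m, ‖(pN N).coeff m‖ * (R:ℝ)^m ≤ ρ := by
    intro N m
    rw [← FormalMultilinearSeries.norm_apply_eq_norm_coef]
    apply LS_coeff_bound hRpos
    · intro z hz
      rw [Metric.mem_sphere, dist_zero_right] at hz
      exact ((hN_an N z (by rw [hz]; exact hRδ)).continuousAt).continuousWithinAt
    · intro z hz
      exact hN_bd N z (by rw [hz]; exact hRδ)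
  -- limits of coefficients along an ultrafilter
  let U : Ultrafilter ℕ := Ultrafilter.of atTop
  have hUat : (U : Filter ℕ) ≤ atTop := Ultrafilter.of_le _
  have hCbd : ∀ m N, ‖(pN N).coeff m‖ ≤ ρ / (R:ℝ)^m := by
    intro m N
    rw [le_div_iff₀ (by positivity)]
    exact hcoeff_bd N m
  have hlim : ∀ m : ℕ, ∃ cc : ℂ, Tendsto (fun N => (pN N).coeff m) (U : Filter ℕ) (𝓝 cc) := by
    intro m
    obtain ⟨cc, -, hcc⟩ := (isCompact_closedBall (0:ℂ) (ρ / (R:ℝ)^m)).ultrafilter_le_nhds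
      (U.map (fun N => (pN N).coeff m)) (by
        rw [Ultrafilter.coe_map, Filter.le_principal_iff]
        exact Filter.mem_map.2 (Filter.univ_mem' (fun N => by
          simpa [Metric.mem_closedBall, dist_zero_right] using hCbd m N)))
    exact ⟨cc, by rwa [Ultrafilter.coe_map] at hcc⟩
  choose c hc using hlim
  have hc_bd : ∀ m, ‖c m‖ * (R:ℝ)^m ≤ ρ := by
    intro m
    have hmem : c m ∈ Metric.closedBall (0:ℂ) (ρ / (R:ℝ)^m) := by
      apply IsClosed.mem_of_tendsto Metric.isClosed_closedBall (hc m)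
      exact Filter.Eventually.of_forall (fun N => by
        simpa [Metric.mem_closedBall, dist_zero_right] using hCbd m N)
    rw [Metric.mem_closedBall, dist_zero_right, le_div_iff₀ (by positivity)] at hmem
    exact hmem
  -- values of low coefficients
  have hcoeff0 : ∀ N, (pN N).coeff 0 = 0 := by
    intro N
    have h1 := (hps N).coeff_zero (fun _ => 1)
    have h2 : (pN N).coeff 0 = (pN N) 0 (fun _ => 1) := rfl
    rw [h2, h1, LSavg_zero_eval hf0]
  have hc0 : c 0 = 0 := by
    have h := hc 0
    rw [show (fun N => (pN N).coeff 0) = (fun _ : ℕ => (0:ℂ)) from funext hcoeff0] at h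
    exact (tendsto_nhds_unique h tendsto_const_nhds)
  have hcoeff1 : ∀ N : ℕ, 1 ≤ N → (pN N).coeff 1 = 1 := by
    intro N h1
    have hd := (hps N).hasFPowerSeriesAt.deriv
    rw [LSavg_deriv han hf0 ha_def.symm ha0 h1] at hd
    exact hd.symm
  have hc1 : c 1 = 1 := by
    have hev : (fun N => (pN N).coeff 1) =ᶠ[(U : Filter ℕ)] (fun _ => (1:ℂ)) := by
      have h1 : ∀ᶠ N in atTop, 1 ≤ N := Filter.eventually_ge_atTop 1
      exact (h1.filter_mono hUat).mono (fun N hN => hcoeff1 N hN)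
    exact tendsto_nhds_unique ((hc 1).congr' hev) tendsto_const_nhds
  -- the limit power series and its sum
  set p : FormalMultilinearSeries ℂ ℂ ℂ :=
    fun m => ContinuousMultilinearMap.mkPiRing ℂ (Fin m) (c m) with hp_def
  have hp_coeff : ∀ m, p.coeff m = c m := by
    intro m
    show (p m) (fun _ => 1) = c m
    rw [hp_def]
    simp [ContinuousMultilinearMap.mkPiRing_apply]
  have hp_norm : ∀ m, ‖p m‖ = ‖c m‖ := fun m => by
    rw [FormalMultilinearSeries.norm_apply_eq_norm_coef, hp_coeff]
  have hp_rad : (R : ENNReal) ≤ p.radius := by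
    apply FormalMultilinearSeries.le_radius_of_bound _ ρ
    intro m
    rw [hp_norm]
    exact hc_bd m
  have hp_pos : (0:ENNReal) < p.radius :=
    lt_of_lt_of_le (by exact_mod_cast hRpos') hp_rad
  set h : ℂ → ℂ := p.sum with hh_def
  have hps_h : HasFPowerSeriesOnBall h p 0 p.radius := p.hasFPowerSeriesOnBall hp_pos
  have hps_hR : HasFPowerSeriesOnBall h p 0 (R : ENNReal) :=
    hps_h.mono (by exact_mod_cast hRpos') hp_rad
  have h_an : AnalyticAt ℂ h 0 := hps_h.analyticAt
  have h_0 : h 0 = 0 := by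
    have h1 := hps_h.coeff_zero (fun _ => 1)
    have h2 : p.coeff 0 = (p 0) (fun _ => 1) := rfl
    rw [← h1, ← h2, hp_coeff, hc0]
  have h_d : deriv h 0 = 1 := by
    have hd := hps_h.hasFPowerSeriesAt.deriv
    have h2 : p.coeff 1 = (p 1) (fun _ => 1) := rfl
    rw [hd, ← h2, hp_coeff, hc1]
  -- pointwise convergence of the averages to h along the ultrafilter
  have hconv : ∀ z : ℂ, ‖z‖ ≤ (R:ℝ)/2 →
      Tendsto (fun N => LSavg a f N z) (U : Filter ℕ) (𝓝 (h z)) := by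
    intro z hz
    rw [Metric.tendsto_nhds]
    intro η hη
    obtain ⟨M, hM⟩ : ∃ M : ℕ, 2 * ρ * (1/2:ℝ)^M < η/3 := by
      obtain ⟨M, hM⟩ := exists_pow_lt_of_lt_one
        (show (0:ℝ) < (η/3)/(2*ρ) by positivity) (by norm_num : (1/2:ℝ) < 1)
      refine ⟨M, ?_⟩
      rw [lt_div_iff₀ (by positivity)] at hM
      nlinarith
    have hpartial : Tendsto (fun N => ∑ m ∈ Finset.range M, z^m * (pN N).coeff m)
        (U : Filter ℕ) (𝓝 (∑ m ∈ Finset.range M, z^m * c m)) := by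
      apply tendsto_finset_sum
      intro m _
      exact (hc m).const_mul _
    have hhz : ‖h z - ∑ m ∈ Finset.range M, z^m * p.coeff m‖ ≤ 2*ρ*(1/2)^M :=
      LS_partial_approx hps_hR (le_of_lt hρ) hRpos
        (fun m => by rw [hp_coeff]; exact hc_bd m) hz M
    have hhz' : ‖h z - ∑ m ∈ Finset.range M, z^m * c m‖ ≤ 2*ρ*(1/2)^M := by
      have : ∑ m ∈ Finset.range M, z^m * p.coeff m = ∑ m ∈ Finset.range M, z^m * c m :=
        Finset.sum_congr rfl (fun m _ => by rw [hp_coeff])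
      rwa [this] at hhz
    have hhNz : ∀ N, ‖LSavg a f N z - ∑ m ∈ Finset.range M, z^m * (pN N).coeff m‖
        ≤ 2*ρ*(1/2)^M := fun N =>
      LS_partial_approx (hps N) (le_of_lt hρ) hRpos (fun m => hcoeff_bd N m) hz M
    filter_upwards [Metric.tendsto_nhds.1 hpartial (η/3) (by positivity)] with N hN3
    rw [dist_eq_norm] at hN3 ⊢
    have e1 := hhNz N
    calc ‖LSavg a f N z - h z‖
        = ‖(LSavg a f N z - ∑ m ∈ Finset.range M, z^m * (pN N).coeff m)
            + ((∑ m ∈ Finset.range M, z^m * (pN N).coeff m) - ∑ m ∈ Finset.range M, z^m * c m)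
            + ((∑ m ∈ Finset.range M, z^m * c m) - h z)‖ := by congr 1; ring
      _ ≤ ‖(LSavg a f N z - ∑ m ∈ Finset.range M, z^m * (pN N).coeff m)
            + ((∑ m ∈ Finset.range M, z^m * (pN N).coeff m) - ∑ m ∈ Finset.range M, z^m * c m)‖
            + ‖(∑ m ∈ Finset.range M, z^m * c m) - h z‖ := norm_add_le _ _
      _ ≤ ‖LSavg a f N z - ∑ m ∈ Finset.range M, z^m * (pN N).coeff m‖
            + ‖(∑ m ∈ Finset.range M, z^m * (pN N).coeff m) - ∑ m ∈ Finset.range M, z^m * c m‖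
            + ‖(∑ m ∈ Finset.range M, z^m * c m) - h z‖ := by
          have := norm_add_le (LSavg a f N z - ∑ m ∈ Finset.range M, z^m * (pN N).coeff m)
            ((∑ m ∈ Finset.range M, z^m * (pN N).coeff m) - ∑ m ∈ Finset.range M, z^m * c m)
          linarith
      _ < η := by
          rw [norm_sub_rev] at hhz'
          have h3 : ‖(∑ m ∈ Finset.range M, z^m * c m) - h z‖ ≤ 2*ρ*(1/2)^M := hhz'
          linarith
  -- the functional equation in the limit
  have hcont0 : Tendsto f (𝓝 0) (𝓝 0) := by
    have hco := han.continuousAt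
    rwa [ContinuousAt, hf0] at hco
  have hball : ∀ᶠ z in 𝓝 (0:ℂ), ‖z‖ ≤ (R:ℝ)/2 ∧ ‖z‖ < δ ∧ ‖f z‖ ≤ (R:ℝ)/2 := by
    have e2 : ∀ᶠ z in 𝓝 (0:ℂ), ‖f z‖ ≤ (R:ℝ)/2 := by
      have hmem : Metric.closedBall (0:ℂ) ((R:ℝ)/2) ∈ 𝓝 (0:ℂ) :=
        Metric.closedBall_mem_nhds _ (by positivity)
      filter_upwards [hcont0.eventually_mem hmem] with z hz
      simpa [Metric.mem_closedBall, dist_zero_right] using hz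
    have e1 : ∀ᶠ z in 𝓝 (0:ℂ), ‖z‖ ≤ (R:ℝ)/2 ∧ ‖z‖ < δ := by
      have hmem : Metric.closedBall (0:ℂ) ((R:ℝ)/2) ∈ 𝓝 (0:ℂ) :=
        Metric.closedBall_mem_nhds _ (by positivity)
      have hmem2 : Metric.ball (0:ℂ) δ ∈ 𝓝 (0:ℂ) := Metric.ball_mem_nhds _ hδ
      filter_upwards [hmem, hmem2] with z h1 h2
      constructor
      · simpa [Metric.mem_closedBall, dist_zero_right] using h1
      · simpa [Metric.mem_ball, dist_zero_right] using h2
    filter_upwards [e1, e2] with z h1 h2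
    exact ⟨h1.1, h1.2, h2⟩
  refine ⟨h, h_an, h_0, h_d, ?_⟩
  filter_upwards [hball] with z hz
  obtain ⟨hz1, hz2, hz3⟩ := hz
  have T1 : Tendsto (fun N => LSavg a f N (f z)) (U : Filter ℕ) (𝓝 (h (f z))) :=
    hconv _ hz3
  have T2 : Tendsto (fun N => LSavg a f N (f z)) (U : Filter ℕ) (𝓝 (a * h z)) := by
    have Ta : Tendsto (fun N => a * LSavg a f N z) (U : Filter ℕ) (𝓝 (a * h z)) :=
      (hconv z hz1).const_mul a
    have Te : Tendsto (fun N => LSavg a f N (f z) - a * LSavg a f N z)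
        (U : Filter ℕ) (𝓝 0) := by
      apply squeeze_zero_norm' (a := fun N : ℕ => (ρ + δ)/N)
      · exact Filter.Eventually.of_forall
          (fun N => LSavg_err ha0 hnorm hz2 (hit_in z hz2) N)
      · exact Tendsto.mono_left (tendsto_const_div_atTop_nhds_zero_nat _) hUat
    have := Ta.add Te
    rw [add_zero] at this
    apply this.congr
    intro N
    ring
  exact tendsto_nhds_unique T1 T2
lemma LS_inv_deriv (G : GermGroup) {f : ℂ → ℂ} (hf : f ∈ G.carrier) :
    ∃ g, g ∈ G.carrier ∧ (∀ᶠ z in 𝓝 (0:ℂ), g (f z) = z) ∧ (∀ᶠ z in 𝓝 (0:ℂ), f (g z) = z) ∧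
      deriv g 0 = (deriv f 0)⁻¹ := by
  obtain ⟨g, hg, hl, hr⟩ := G.inv_mem f hf
  refine ⟨g, hg, hl, hr, ?_⟩
  have h1 : (fun z => g (f z)) =ᶠ[𝓝 (0:ℂ)] (id : ℂ → ℂ) := hl
  have h2 : deriv (fun z => g (f z)) 0 = deriv (id : ℂ → ℂ) 0 := h1.deriv_eq
  rw [deriv_id, LS_deriv_comp (G.analytic g hg).differentiableAt
    (G.analytic f hf).differentiableAt (G.fixes_zero f hf)] at h2
  have hd0 : deriv f 0 ≠ 0 := G.deriv_ne f hf
  field_simp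
  linear_combination h2

lemma LS_norm_one (G : GermGroup) (hst : LStableSet G.carrier) {f : ℂ → ℂ}
    (hf : f ∈ G.carrier) : ‖deriv f 0‖ = 1 := by
  by_contra hne
  rcases lt_or_gt_of_ne hne with hlt | hgt
  · obtain ⟨g, hg, _, _, hd⟩ := LS_inv_deriv G hf
    have hd0 : deriv f 0 ≠ 0 := G.deriv_ne f hf
    have hpos : 0 < ‖deriv f 0‖ := norm_pos_iff.2 hd0
    have hgt1 : 1 < ‖deriv g 0‖ := by
      rw [hd, norm_inv]
      rw [lt_inv_comm₀ one_pos hpos]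
      simpa using hlt
    exact LS_escape hst hg (G.analytic g hg) (G.fixes_zero g hg) hgt1
  · exact LS_escape hst hf (G.analytic f hf) (G.fixes_zero f hf) hgt

lemma LS_tendsto_zero (G : GermGroup) {f : ℂ → ℂ} (hf : f ∈ G.carrier) :
    Tendsto f (𝓝 (0:ℂ)) (𝓝 (0:ℂ)) := by
  have hco := (G.analytic f hf).continuousAt
  rwa [ContinuousAt, G.fixes_zero f hf] at hco

lemma LS_mult_one_id (G : GermGroup) (hst : LStableSet G.carrier) {f : ℂ → ℂ}
    (hf : f ∈ G.carrier) (hd : deriv f 0 = 1) : f =ᶠ[𝓝 (0:ℂ)] id := by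
  obtain ⟨h, h_an, h_0, h_d, h_lin⟩ := LS_linearize hst hf (G.analytic f hf)
    (G.fixes_zero f hf) (by rw [hd]; norm_num)
  rw [hd] at h_lin
  have hstrict : HasStrictDerivAt h (deriv h 0) 0 :=
    ContDiffAt.hasStrictDerivAt (n := 1) h_an.contDiffAt one_ne_zero
  have hFD := hstrict.hasStrictFDerivAt_equiv (by rw [h_d]; exact one_ne_zero)
  have hLI := hFD.eventually_left_inverse
  have hLIf : ∀ᶠ z in 𝓝 (0:ℂ),
      (hFD.localInverse h _ 0) (h (f z)) = f z := (LS_tendsto_zero G hf).eventually hLI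
  filter_upwards [h_lin, hLI, hLIf] with z e1 e2 e3
  have : f z = z := by
    rw [← e3, e1, one_mul, e2]
  simpa using this

lemma LS_iter_mem (G : GermGroup) {f : ℂ → ℂ} (hf : f ∈ G.carrier) (n : ℕ) :
    f^[n] ∈ G.carrier := by
  induction n with
  | zero => exact G.id_mem
  | succ n ih =>
      rw [Function.iterate_succ']
      exact G.comp_mem f hf _ ih

lemma LS_same_mult (G : GermGroup) (hst : LStableSet G.carrier) {f g : ℂ → ℂ}
    (hf : f ∈ G.carrier) (hg : g ∈ G.carrier) (hd : deriv f 0 = deriv g 0) :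
    f =ᶠ[𝓝 (0:ℂ)] g := by
  obtain ⟨g₁, hg₁, hl, hr, hd₁⟩ := LS_inv_deriv G hg
  have hc : f ∘ g₁ ∈ G.carrier := G.comp_mem f hf g₁ hg₁
  have hdc : deriv (f ∘ g₁) 0 = 1 := by
    rw [show (f ∘ g₁) = fun z => f (g₁ z) from rfl,
      LS_deriv_comp (G.analytic f hf).differentiableAt
        (G.analytic g₁ hg₁).differentiableAt (G.fixes_zero g₁ hg₁), hd₁, hd,
      mul_inv_cancel₀ (G.deriv_ne g hg)]
  have hid := LS_mult_one_id G hst hc hdc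
  have hid' : ∀ᶠ z in 𝓝 (0:ℂ), f (g₁ z) = z := hid
  have h1 : ∀ᶠ w in 𝓝 (0:ℂ), f (g₁ (g w)) = g w := (LS_tendsto_zero G hg).eventually hid'
  filter_upwards [h1, hl] with w e1 e2
  rw [e2] at e1
  exact e1

lemma LS_comm (G : GermGroup) (hst : LStableSet G.carrier) {f g : ℂ → ℂ}
    (hf : f ∈ G.carrier) (hg : g ∈ G.carrier) :
    f ∘ g =ᶠ[𝓝 (0:ℂ)] g ∘ f := by
  obtain ⟨f₁, hf₁, hlf, hrf, hdf₁⟩ := LS_inv_deriv G hf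
  obtain ⟨g₁, hg₁, hlg, hrg, hdg₁⟩ := LS_inv_deriv G hg
  have hfix : ∀ {u : ℂ → ℂ}, u ∈ G.carrier → u 0 = 0 := fun {u} hu => G.fixes_zero u hu
  have hdiff : ∀ {u : ℂ → ℂ}, u ∈ G.carrier → DifferentiableAt ℂ u 0 :=
    fun {u} hu => (G.analytic u hu).differentiableAt
  have hk : f₁ ∘ g₁ ∈ G.carrier := G.comp_mem f₁ hf₁ g₁ hg₁
  have hgk : g ∘ (f₁ ∘ g₁) ∈ G.carrier := G.comp_mem g hg _ hk
  have hcmem : f ∘ (g ∘ (f₁ ∘ g₁)) ∈ G.carrier := G.comp_mem f hf _ hgk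
  have hdk : deriv (f₁ ∘ g₁) 0 = deriv f₁ 0 * deriv g₁ 0 :=
    LS_deriv_comp (hdiff hf₁) (hdiff hg₁) (hfix hg₁)
  have hdgk : deriv (g ∘ (f₁ ∘ g₁)) 0 = deriv g 0 * (deriv f₁ 0 * deriv g₁ 0) := by
    rw [show (g ∘ (f₁ ∘ g₁)) = fun z => g ((f₁ ∘ g₁) z) from rfl,
      LS_deriv_comp (hdiff hg) (hdiff hk) (hfix hk), hdk]
  have hdc : deriv (f ∘ (g ∘ (f₁ ∘ g₁))) 0 = 1 := by
    rw [show (f ∘ (g ∘ (f₁ ∘ g₁))) = fun z => f ((g ∘ (f₁ ∘ g₁)) z) from rfl,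
      LS_deriv_comp (hdiff hf) (hdiff hgk) (hfix hgk), hdgk, hdf₁, hdg₁]
    field_simp [G.deriv_ne f hf, G.deriv_ne g hg]
  have hid := LS_mult_one_id G hst hcmem hdc
  have hid' : ∀ᶠ z in 𝓝 (0:ℂ), f (g (f₁ (g₁ z))) = z := hid
  have hgf0 : Tendsto (fun w => g (f w)) (𝓝 (0:ℂ)) (𝓝 (0:ℂ)) :=
    (LS_tendsto_zero G hg).comp (LS_tendsto_zero G hf)
  have h1 : ∀ᶠ w in 𝓝 (0:ℂ), f (g (f₁ (g₁ (g (f w))))) = g (f w) := hgf0.eventually hid'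
  have h2 : ∀ᶠ w in 𝓝 (0:ℂ), g₁ (g (f w)) = f w := (LS_tendsto_zero G hf).eventually hlg
  have h3 : ∀ᶠ w in 𝓝 (0:ℂ), f₁ (f w) = w := hlf
  filter_upwards [h1, h2, h3] with w e1 e2 e3
  show f (g w) = g (f w)
  rw [e2, e3] at e1
  exact e1
lemma LS_rigidity {a : ℂ} (hroot : ∀ n : ℕ, 1 ≤ n → a ^ n ≠ 1) (ha0 : a ≠ 0)
    {f₀ : ℂ → ℂ} (hf₀ : AnalyticAt ℂ f₀ 0) (hf₀0 : f₀ 0 = 0) (hf₀d : deriv f₀ 0 = a)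
    {u : ℂ → ℂ} (hu : AnalyticAt ℂ u 0) (hu0 : u 0 = 0) (hud : deriv u 0 = 0)
    (heq : ∀ᶠ z in 𝓝 (0:ℂ), u (f₀ z) = a * u z) : ∀ᶠ z in 𝓝 (0:ℂ), u z = 0 := by
  by_cases horder : analyticOrderAt u 0 = ⊤
  · exact analyticOrderAt_eq_top.1 horder
  obtain ⟨k, hk⟩ : ∃ k : ℕ, analyticOrderAt u 0 = (k : ℕ∞) := ⟨(analyticOrderAt u 0).toNat, (ENat.coe_toNat horder).symm⟩
  obtain ⟨g, hg_an, hg0, hgeq⟩ := (hu.analyticOrderAt_eq_natCast).1 hk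
  exfalso
  have hgeq' : ∀ᶠ z in 𝓝 (0:ℂ), u z = z ^ k * g z := by
    filter_upwards [hgeq] with z hz
    rw [hz]; simp [smul_eq_mul]
  rcases Nat.eq_zero_or_pos k with rfl | hkpos
  · -- k = 0 : u 0 = g 0 ≠ 0 contradiction
    have := hgeq'.self_of_nhds
    rw [hu0] at this
    simp at this
    exact hg0 this.symm
  -- main case : compare leading coefficients
  have htend0 : Tendsto f₀ (𝓝 (0:ℂ)) (𝓝 (0:ℂ)) := by
    have hco := hf₀.continuousAt
    rwa [ContinuousAt, hf₀0] at hco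
  have E1 : ∀ᶠ z in 𝓝 (0:ℂ), u (f₀ z) = (f₀ z) ^ k * g (f₀ z) := htend0.eventually hgeq'
  have E2 : ∀ᶠ z in 𝓝 (0:ℂ), (f₀ z) ^ k * g (f₀ z) = a * (z ^ k * g z) := by
    filter_upwards [heq, E1, hgeq'] with z e1 e2 e3
    rw [← e2, e1, e3]
  -- pass to the punctured neighborhood and divide by z^k
  have E3 : ∀ᶠ z in 𝓝[≠] (0:ℂ), (f₀ z / z) ^ k * g (f₀ z) = a * g z := by
    have E2' : ∀ᶠ z in 𝓝[≠] (0:ℂ), (f₀ z) ^ k * g (f₀ z) = a * (z ^ k * g z) :=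
      nhdsWithin_le_nhds E2
    filter_upwards [E2', self_mem_nhdsWithin] with z e1 (hz : z ≠ 0)
    have hzk : z ^ k ≠ 0 := pow_ne_zero k hz
    rw [div_pow]
    field_simp
    linear_combination e1
  -- limits along the punctured neighborhood
  have hslope : Tendsto (fun z => f₀ z / z) (𝓝[≠] (0:ℂ)) (𝓝 a) := by
    have hder : HasDerivAt f₀ a 0 := by
      have := hf₀.differentiableAt.hasDerivAt
      rwa [hf₀d] at this
    have := hasDerivAt_iff_tendsto_slope.1 hder
    apply this.congr'
    filter_upwards [self_mem_nhdsWithin] with z (hz : z ≠ 0)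
    simp [slope, hf₀0, sub_zero]
    rw [div_eq_inv_mul]
  have htendg : Tendsto (fun z => g (f₀ z)) (𝓝[≠] (0:ℂ)) (𝓝 (g 0)) := by
    apply (hg_an.continuousAt.tendsto).comp
    exact htend0.mono_left nhdsWithin_le_nhds
  have hL : Tendsto (fun z => (f₀ z / z) ^ k * g (f₀ z)) (𝓝[≠] (0:ℂ))
      (𝓝 (a ^ k * g 0)) := (hslope.pow k).mul htendg
  have hRt : Tendsto (fun z => a * g z) (𝓝[≠] (0:ℂ)) (𝓝 (a * g 0)) :=
    (hg_an.continuousAt.tendsto.mono_left nhdsWithin_le_nhds).const_mul a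
  have hunique : a ^ k * g 0 = a * g 0 :=
    tendsto_nhds_unique (hL.congr' E3) hRt
  have hak : a ^ k = a := mul_right_cancel₀ hg0 hunique
  -- k = 1 is impossible since deriv u 0 = 0, k ≥ 2 contradicts non-resonance
  rcases Nat.lt_or_ge k 2 with hk2 | hk2
  · -- k = 1
    have hk1 : k = 1 := by omega
    subst hk1
    have hderiv_u : deriv u 0 = g 0 := by
      have e : deriv u 0 = deriv (fun z => z ^ 1 * g z) 0 := Filter.EventuallyEq.deriv_eq hgeq'
      rw [e]
      have e2 : deriv (fun z : ℂ => z ^ 1 * g z) 0 = deriv (fun z : ℂ => z * g z) 0 := by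
        congr 1
        ext z
        rw [pow_one]
      rw [e2, deriv_fun_mul differentiableAt_fun_id hg_an.differentiableAt]
      simp
    rw [hud] at hderiv_u
    exact hg0 hderiv_u.symm
  · -- k ≥ 2
    have hone : a ^ (k - 1) = 1 := by
      apply mul_right_cancel₀ ha0
      rw [one_mul]
      calc a ^ (k-1) * a = a ^ ((k-1)+1) := by rw [pow_succ]
        _ = a ^ k := by congr 1; omega
        _ = a := hak
    exact hroot (k-1) (by omega) hone

lemma LS_pow_list {Q : ℕ} : ∀ L : List ℂ, (∀ x ∈ L, x ^ Q = 1) → L.prod ^ Q = 1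
  | [], _ => by simp
  | (a :: L), h => by
      rw [List.prod_cons, mul_pow, h a (by simp),
        LS_pow_list L (fun x hx => h x (by simp [hx])), mul_one]

lemma LS_word (G : GermGroup) {T : Set (ℂ → ℂ)} (hT : T ⊆ G.carrier) :
    ∀ l : List (ℂ → ℂ), (∀ g ∈ l, g ∈ T) →
      (l.foldr (· ∘ ·) id) 0 = 0 ∧ DifferentiableAt ℂ (l.foldr (· ∘ ·) id) 0 ∧
        deriv (l.foldr (· ∘ ·) id) 0 = (l.map (fun g => deriv g 0)).prod
  | [], _ => by
      refine ⟨rfl, differentiableAt_id, ?_⟩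
      simp
  | (g :: l), h => by
      have hg : g ∈ G.carrier := hT (h g (by simp))
      obtain ⟨h0, hdiff, hder⟩ := LS_word G hT l (fun t ht => h t (by simp [ht]))
      have hfold : ((g :: l).foldr (· ∘ ·) id) = fun z => g ((l.foldr (· ∘ ·) id) z) := rfl
      refine ⟨?_, ?_, ?_⟩
      · rw [hfold]
        simp only []
        rw [h0, G.fixes_zero g hg]
      · rw [hfold]
        apply DifferentiableAt.comp
        · rw [h0]; exact (G.analytic g hg).differentiableAt
        · exact hdiff
      · rw [hfold, LS_deriv_comp (G.analytic g hg).differentiableAt hdiff h0, hder]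
        simp

lemma LS_nonresonant {a : ℂ} (hnorm : ‖a‖ = 1) (hroot : ∀ n : ℕ, 1 ≤ n → a ^ n ≠ 1) :
    ∃ l : ℝ, Irrational l ∧ a = Complex.exp (2 * (Real.pi : ℂ) * Complex.I * (l : ℝ)) := by
  have habs : ‖a‖ = 1 := hnorm
  have hexp : a = Complex.exp ((a.arg : ℂ) * Complex.I) := by
    have := Complex.norm_mul_exp_arg_mul_I a
    rw [habs] at this
    simpa using this.symm
  refine ⟨a.arg / (2 * Real.pi), ?_, ?_⟩
  · -- irrational
    rw [Irrational]
    intro hmem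
    obtain ⟨q, hq⟩ := hmem
    have h2pi : (0:ℝ) < 2 * Real.pi := Real.two_pi_pos
    have harg : a.arg = 2 * Real.pi * (q : ℝ) := by
      field_simp at hq
      linarith
    have hqden : ((q:ℝ) * (q.den:ℝ) : ℝ) = (q.num : ℝ) := by
      rw [Rat.cast_def]
      field_simp
    have hr : (q.den : ℝ) * a.arg = (q.num:ℝ) * (2*Real.pi) := by
      rw [harg]
      linear_combination (2*Real.pi) * hqden
    have hpow : a ^ q.den = 1 := by
      rw [hexp, ← Complex.exp_nat_mul]
      have key : ((q.den:ℂ)) * ((a.arg:ℂ) * Complex.I)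
          = (q.num:ℂ) * (2 * (Real.pi:ℂ) * Complex.I) := by
        calc ((q.den:ℂ)) * ((a.arg:ℂ) * Complex.I)
            = (((q.den:ℝ) * a.arg : ℝ) : ℂ) * Complex.I := by push_cast; ring
          _ = (((q.num:ℝ) * (2*Real.pi) : ℝ) : ℂ) * Complex.I := by rw [hr]
          _ = (q.num:ℂ) * (2 * (Real.pi:ℂ) * Complex.I) := by push_cast; ring
      rw [key]
      exact Complex.exp_int_mul_two_pi_mul_I q.num
    exact hroot q.den (by exact_mod_cast q.pos) hpow
  · -- the exponential formula
    conv_lhs => rw [hexp]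
    congr 1
    have hpic : (Real.pi:ℂ) ≠ 0 := Complex.ofReal_ne_zero.mpr Real.pi_ne_zero
    push_cast
    field_simp [hpic]

/-- a finitely generated `L`-stable subgroup `G ⊆ Diff(ℂ,0)` is either
finite cyclic, or an abelian analytically linearizable group containing an element
conjugate to an irrational rotation (circle type). -/
theorem LStable_group_dichotomy (G : GermGroup)
    (hfg : G.FinitelyGenerated) (hst : LStableSet G.carrier) :
    (GermFinite G.carrier ∧ GermCyclic G.carrier) ∨
    ((∀ f ∈ G.carrier, ∀ g ∈ G.carrier, f ∘ g =ᶠ[𝓝 (0:ℂ)] g ∘ f) ∧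
     (∃ h : ℂ → ℂ, AnalyticAt ℂ h 0 ∧ h 0 = 0 ∧ deriv h 0 ≠ 0 ∧
        ∀ f ∈ G.carrier, ∀ᶠ z in 𝓝 (0:ℂ), h (f z) = deriv f 0 * h z) ∧
     (∃ f ∈ G.carrier, NonResonant f ∧ Linearizable f)) := by
  by_cases hcase : ∀ f ∈ G.carrier, ∃ n : ℕ, 1 ≤ n ∧ (deriv f 0) ^ n = 1
  · -- ============ finite cyclic case ============
    left
    obtain ⟨T, hTfin, hTsub, hgen⟩ := hfg
    set TF := hTfin.toFinset with hTF
    have hTQ : ∀ t ∈ TF, ∃ n : ℕ, 1 ≤ n ∧ (deriv t 0) ^ n = 1 := fun t ht =>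
      hcase t (hTsub (hTfin.mem_toFinset.1 ht))
    choose! nT hn1 hnpow using hTQ
    set Q := ∏ t ∈ TF, nT t with hQ
    have hQ1 : 1 ≤ Q := Finset.one_le_prod' (fun t ht => hn1 t ht)
    have hQf : ∀ f ∈ G.carrier, (deriv f 0) ^ Q = 1 := by
      intro f hf
      obtain ⟨l, hl, hfw⟩ := hgen f hf
      have hw := LS_word G hTsub l hl
      have hder : deriv f 0 = (l.map (fun g => deriv g 0)).prod := by
        rw [Filter.EventuallyEq.deriv_eq hfw]
        exact hw.2.2
      rw [hder]
      apply LS_pow_list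
      intro x hx
      obtain ⟨g, hgl, rfl⟩ := List.mem_map.1 hx
      have hgT : g ∈ TF := hTfin.mem_toFinset.2 (hl g hgl)
      obtain ⟨m, hm⟩ := Finset.dvd_prod_of_mem nT hgT
      rw [← hQ] at hm
      rw [hm, pow_mul, hnpow g hgT, one_pow]
    set M : Set ℂ := (fun f => deriv f 0) '' G.carrier with hM
    have hMfin : M.Finite := by
      apply Set.Finite.subset (Polynomial.nthRootsFinset Q (1:ℂ)).finite_toSet
      rintro μ ⟨f, hf, rfl⟩
      rw [Finset.mem_coe, Polynomial.mem_nthRootsFinset (by omega) (1:ℂ)]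
      exact hQf f hf
    have hinj : ∀ f ∈ G.carrier, ∀ g ∈ G.carrier, deriv f 0 = deriv g 0 →
        f =ᶠ[𝓝 (0:ℂ)] g := fun f hf g hg hd => LS_same_mult G hst hf hg hd
    constructor
    · -- GermFinite
      have hsec : ∀ μ ∈ M, ∃ f, f ∈ G.carrier ∧ deriv f 0 = μ := by
        rintro μ ⟨f, hf, rfl⟩; exact ⟨f, hf, rfl⟩
      choose! sec hsec1 hsec2 using hsec
      refine ⟨sec '' M, hMfin.image _, ?_⟩
      intro f hf
      have hfM : deriv f 0 ∈ M := ⟨f, hf, rfl⟩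
      exact ⟨sec (deriv f 0), Set.mem_image_of_mem _ hfM,
        hinj f hf _ (hsec1 _ hfM) (hsec2 _ hfM).symm⟩
    · -- GermCyclic
      have hM1 : (1:ℂ) ∈ M := ⟨id, G.id_mem, by simp⟩
      have hMmul : ∀ x ∈ M, ∀ y ∈ M, x * y ∈ M := by
        rintro x ⟨fx, hfx, rfl⟩ y ⟨fy, hfy, rfl⟩
        refine ⟨fx ∘ fy, G.comp_mem fx hfx fy hfy, ?_⟩
        show deriv (fx ∘ fy) 0 = deriv fx 0 * deriv fy 0
        rw [show (fx ∘ fy) = fun z => fx (fy z) from rfl]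
        exact LS_deriv_comp (G.analytic fx hfx).differentiableAt
          (G.analytic fy hfy).differentiableAt (G.fixes_zero fy hfy)
      have hMinv : ∀ x ∈ M, x⁻¹ ∈ M := by
        rintro x ⟨fx, hfx, rfl⟩
        obtain ⟨g, hgc, _, _, hd⟩ := LS_inv_deriv G hfx
        exact ⟨g, hgc, hd⟩
      let H : Subgroup ℂˣ :=
        { carrier := {x : ℂˣ | (x : ℂ) ∈ M}
          mul_mem' := fun {x y} hx hy => by
            show ((x * y : ℂˣ) : ℂ) ∈ M
            rw [Units.val_mul]
            exact hMmul _ hx _ hy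
          one_mem' := by
            show ((1 : ℂˣ) : ℂ) ∈ M
            rw [Units.val_one]
            exact hM1
          inv_mem' := fun {x} hx => by
            show ((x⁻¹ : ℂˣ) : ℂ) ∈ M
            rw [Units.val_inv_eq_inv_val]
            exact hMinv _ hx }
      have hHfin : {x : ℂˣ | (x : ℂ) ∈ M}.Finite :=
        hMfin.preimage (fun a _ b _ h => Units.ext h)
      haveI : Finite H := hHfin.to_subtype
      haveI : IsCyclic H := subgroup_units_cyclic H
      obtain ⟨x, hx⟩ := IsCyclic.exists_monoid_generator (α := H)
      have hxM : ((x : ℂˣ) : ℂ) ∈ M := x.2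
      obtain ⟨g₀, hg₀c, hg₀d⟩ := hxM
      refine ⟨g₀, hg₀c, fun f hf => ?_⟩
      have hyM : deriv f 0 ∈ M := ⟨f, hf, rfl⟩
      have hyH : (Units.mk0 (deriv f 0) (G.deriv_ne f hf)) ∈ H := by
        show ((Units.mk0 (deriv f 0) (G.deriv_ne f hf) : ℂˣ) : ℂ) ∈ M
        simpa using hyM
      obtain ⟨n, hn⟩ := (Submonoid.mem_powers_iff _ _).1
        (hx ⟨Units.mk0 (deriv f 0) (G.deriv_ne f hf), hyH⟩)
      refine ⟨n, ?_⟩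
      have hcoe := congrArg (fun u : H => ((u : ℂˣ) : ℂ)) hn
      simp only [SubgroupClass.coe_pow, Units.val_pow_eq_pow_val, Units.val_mk0] at hcoe
      have hg₀d' : deriv g₀ 0 = ((x : ℂˣ) : ℂ) := hg₀d
      have hder : deriv f 0 = deriv (g₀^[n]) 0 := by
        rw [LS_iter_deriv (G.analytic g₀ hg₀c) (G.fixes_zero g₀ hg₀c) n, hg₀d']
        exact hcoe.symm
      exact hinj f hf _ (LS_iter_mem G hg₀c n) hder
  · -- ============ circle type case ============
    right
    push_neg at hcase
    obtain ⟨f₀, hf₀c, hroot'⟩ := hcase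
    have hroot : ∀ n : ℕ, 1 ≤ n → (deriv f₀ 0) ^ n ≠ 1 := fun n hn h1 => hroot' n hn h1
    have ha0 : deriv f₀ 0 ≠ 0 := G.deriv_ne f₀ hf₀c
    have hn1 : ‖deriv f₀ 0‖ = 1 := LS_norm_one G hst hf₀c
    obtain ⟨h, h_an, h_0, h_d, h_lin⟩ := LS_linearize hst hf₀c (G.analytic f₀ hf₀c)
      (G.fixes_zero f₀ hf₀c) hn1
    have hall : ∀ f ∈ G.carrier, ∀ᶠ z in 𝓝 (0:ℂ), h (f z) = deriv f 0 * h z := by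
      intro f hfc
      have hψ_an : AnalyticAt ℂ (fun z => h (f z)) 0 := by
        apply AnalyticAt.comp (x := (0:ℂ)) _ (G.analytic f hfc)
        rw [G.fixes_zero f hfc]
        exact h_an
      have hψ0 : h (f 0) = 0 := by rw [G.fixes_zero f hfc, h_0]
      have hψd : deriv (fun z => h (f z)) 0 = deriv f 0 := by
        rw [LS_deriv_comp h_an.differentiableAt (G.analytic f hfc).differentiableAt
          (G.fixes_zero f hfc), h_d, one_mul]
      have hcomm : ∀ᶠ z in 𝓝 (0:ℂ), f (f₀ z) = f₀ (f z) := LS_comm G hst hfc hf₀c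
      have hψeq : ∀ᶠ z in 𝓝 (0:ℂ), h (f (f₀ z)) = deriv f₀ 0 * h (f z) := by
        have e2 : ∀ᶠ z in 𝓝 (0:ℂ), h (f₀ (f z)) = deriv f₀ 0 * h (f z) :=
          (LS_tendsto_zero G hfc).eventually h_lin
        filter_upwards [hcomm, e2] with z d1 d2
        rw [d1, d2]
      have hu_an : AnalyticAt ℂ (fun z => h (f z) - deriv f 0 * h z) 0 :=
        hψ_an.sub (analyticAt_const.mul h_an)
      have hu0 : (fun z => h (f z) - deriv f 0 * h z) 0 = 0 := by
        show h (f 0) - deriv f 0 * h 0 = 0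
        rw [hψ0, h_0]
        ring
      have hud : deriv (fun z => h (f z) - deriv f 0 * h z) 0 = 0 := by
        rw [deriv_fun_sub hψ_an.differentiableAt
          (h_an.differentiableAt.const_mul _), hψd,
          deriv_const_mul _ h_an.differentiableAt, h_d]
        ring
      have hueq : ∀ᶠ z in 𝓝 (0:ℂ),
          (fun z => h (f z) - deriv f 0 * h z) (f₀ z)
            = deriv f₀ 0 * (fun z => h (f z) - deriv f 0 * h z) z := by
        filter_upwards [hψeq, h_lin] with z d1 d2
        show h (f (f₀ z)) - deriv f 0 * h (f₀ z) = deriv f₀ 0 * (h (f z) - deriv f 0 * h z)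
        rw [d1, d2]
        ring
      have hzero := LS_rigidity hroot ha0 (G.analytic f₀ hf₀c) (G.fixes_zero f₀ hf₀c) rfl
        hu_an hu0 hud hueq
      filter_upwards [hzero] with z hz
      have : h (f z) - deriv f 0 * h z = 0 := hz
      linear_combination this
    refine ⟨fun f hf g hg => LS_comm G hst hf hg,
      ⟨h, h_an, h_0, by rw [h_d]; exact one_ne_zero, hall⟩,
      ⟨f₀, hf₀c, ?_, ⟨h, h_an, h_0, by rw [h_d]; exact one_ne_zero, h_lin⟩⟩⟩
    obtain ⟨l, hl1, hl2⟩ := LS_nonresonant hn1 hroot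
    exact ⟨l, hl1, hl2⟩
end
end

section
/- Let G ⊆ Diff(ℂ,0) be a finitely generated L-stable subgroup. Then every finitely generated subgroup of G all of whose elements are resonant is finite. -/
open Filter Topology Metric

noncomputable section

lemma pseudoOrbit_iterate {S : Set (ℂ → ℂ)} {f : ℂ → ℂ} (hf : f ∈ S) (p : ℂ) (m : ℕ) :
    PseudoOrbit S p (f^[m] p) := by
  induction m with
  | zero => exact PseudoOrbit.base
  | succ n ih => rw [Function.iterate_succ_apply']; exact ih.step hf

lemma eventually_eq_id_of_deriv_one {S : Set (ℂ → ℂ)} (hst : LStableSet S)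
    {f : ℂ → ℂ} (hfS : f ∈ S) (hfa : AnalyticAt ℂ f 0) (hf0 : f 0 = 0)
    (hfd : deriv f 0 = 1) : ∀ᶠ z in 𝓝 (0:ℂ), f z = z := by
  by_contra hne
  -- order of f - id
  have hφa : AnalyticAt ℂ (fun z => f z - z) 0 := hfa.sub analyticAt_id
  have hφne : ¬ ∀ᶠ z in 𝓝 (0:ℂ), f z - z = 0 := by
    intro h; exact hne (h.mono fun z hz => sub_eq_zero.mp hz)
  have horder : analyticOrderAt (fun z => f z - z) 0 ≠ ⊤ := fun h => hφne (analyticOrderAt_eq_top.mp h)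
  obtain ⟨k, hk⟩ := WithTop.ne_top_iff_exists.mp horder
  obtain ⟨g, hga, hg0, hfac'⟩ := (hφa.analyticOrderAt_eq_natCast (n := k)).mp hk.symm
  have hfac : ∀ᶠ z in 𝓝 (0:ℂ), f z - z = z ^ k * g z := by
    filter_upwards [hfac'] with z hz
    simpa [smul_eq_mul] using hz
  -- k ≥ 2
  have hk0 : k ≠ 0 := by
    intro h
    have := hfac.self_of_nhds
    rw [h, hf0] at this
    simp at this
    exact hg0 this.symm
  have hk1 : k ≠ 1 := by
    intro h
    have hd1 : deriv (fun z => f z - z) 0 = 0 := by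
      rw [deriv_fun_sub (hfa.differentiableAt) differentiableAt_fun_id, hfd, deriv_id'']
      ring
    have hd2 : deriv (fun z => f z - z) 0 = deriv (fun z : ℂ => z ^ k * g z) 0 :=
      Filter.EventuallyEq.deriv_eq hfac
    have hd3 : deriv (fun z : ℂ => z ^ k * g z) 0 = g 0 := by
      rw [h]
      simp only [pow_one]
      rw [deriv_fun_mul differentiableAt_fun_id hga.differentiableAt]
      simp
    rw [hd2, hd3] at hd1
    exact hg0 hd1
  have hk2 : 2 ≤ k := by omega
  -- analyticity radius
  obtain ⟨ε, hε, hεan⟩ : ∃ ε > 0, ∀ w, dist w (0:ℂ) < ε → AnalyticAt ℂ f w :=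
    Metric.eventually_nhds_iff.mp hfa.eventually_analyticAt
  set r := ε / 2 with hr
  have hr0 : 0 < r := by positivity
  have hanU : ∀ w ∈ closedBall (0:ℂ) r, AnalyticAt ℂ f w := by
    intro w hw
    apply hεan
    have := mem_closedBall.mp hw
    rw [hr] at this
    linarith
  -- stability
  obtain ⟨V, hV, hVU, horb⟩ := hst (closedBall (0:ℂ) r) (closedBall_mem_nhds _ hr0)
  obtain ⟨ρ₀, hρ₀, hρ₀V⟩ := Metric.mem_nhds_iff.mp hV
  set ρ := min ρ₀ r with hρdef
  have hρ0 : 0 < ρ := lt_min hρ₀ hr0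
  have hρr : ρ ≤ r := min_le_right _ _
  have hρV : ball (0:ℂ) ρ ⊆ V := fun z hz => hρ₀V (ball_subset_ball (min_le_left _ _) hz)
  have horbit : ∀ z ∈ ball (0:ℂ) ρ, ∀ m : ℕ, f^[m] z ∈ closedBall (0:ℂ) r :=
    fun z hz m => horb z (hρV hz) _ (pseudoOrbit_iterate hfS z m)
  have hiter_diff : ∀ m : ℕ, ∀ z ∈ ball (0:ℂ) ρ, DifferentiableAt ℂ (f^[m]) z := by
    intro m
    induction m with
    | zero => intro z _; simpa using differentiableAt_fun_id
    | succ n ih =>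
      intro z hz
      rw [Function.iterate_succ']
      exact DifferentiableAt.comp z ((hanU _ (horbit z hz n)).differentiableAt) (ih z hz)
  have hiter0 : ∀ m : ℕ, f^[m] (0:ℂ) = 0 := fun m => Function.iterate_fixed hf0 m
  -- the inductive construction of g_m
  have hrec : ∀ m : ℕ, ∃ gm : ℂ → ℂ, AnalyticAt ℂ gm 0 ∧ gm 0 = (m : ℂ) * g 0 ∧
      ∀ᶠ z in 𝓝 (0:ℂ), f^[m] z = z + z ^ k * gm z := by
    intro m
    induction m with
    | zero => exact ⟨0, analyticAt_const, by simp, by simp⟩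
    | succ n ih =>
      obtain ⟨gm, hgma, hgm0, hgmE⟩ := ih
      set u : ℂ → ℂ := fun z => 1 + z ^ (k - 1) * gm z with hu
      have hua : AnalyticAt ℂ u 0 := analyticAt_const.add ((analyticAt_id.pow _).mul hgma)
      have hu0 : u 0 = 1 := by
        simp [hu, zero_pow (show k - 1 ≠ 0 by omega)]
      have hwu : ∀ᶠ z in 𝓝 (0:ℂ), f^[n] z = z * u z := by
        filter_upwards [hgmE] with z hz
        have hpow : z ^ k = z * z ^ (k - 1) := by
          rw [← pow_succ']; congr 1; omega
        rw [hz, hpow, hu]; ring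
      have htend : Filter.Tendsto (fun z => z * u z) (𝓝 (0:ℂ)) (𝓝 (0:ℂ)) := by
        have := (analyticAt_id.fun_mul hua).continuousAt.tendsto
        simpa [hu0] using this
      have hfac2 : ∀ᶠ w in 𝓝 (0:ℂ), f w = w + w ^ k * g w := by
        filter_upwards [hfac] with w hw
        rw [sub_eq_iff_eq_add] at hw; rw [hw]; ring
      have hE2 : ∀ᶠ z in 𝓝 (0:ℂ), f (z * u z) = z * u z + (z * u z) ^ k * g (z * u z) :=
        htend.eventually hfac2
      have hcomp : AnalyticAt ℂ (fun z => g (z * u z)) 0 := by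
        have hga' : AnalyticAt ℂ g ((0:ℂ) * u 0) := by simpa using hga
        exact AnalyticAt.comp (f := fun z : ℂ => z * u z) hga' (analyticAt_id.mul hua)
      refine ⟨fun z => u z ^ k * g (z * u z) + gm z,
        ((hua.pow _).mul hcomp).add hgma, ?_, ?_⟩
      · simp [hu0, hgm0]
        push_cast; ring
      · filter_upwards [hgmE, hwu, hE2] with z h1 h2 h3
        have hzu : z * u z = z + z ^ k * gm z := by rw [← h2, h1]
        rw [Function.iterate_succ_apply', h2, h3, mul_pow, hzu]
        ring
  -- maximum principle bound
  set ρ' := ρ / 2 with hρ'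
  have hρ'0 : 0 < ρ' := by positivity
  have hρ'ρ : ρ' < ρ := by rw [hρ']; linarith
  set C := (r + r) / ρ' ^ k with hC
  have hbound : ∀ m : ℕ, (m : ℝ) * ‖g 0‖ ≤ C := by
    intro m
    obtain ⟨gm, hgma, hgm0, hgmE⟩ := hrec m
    set Gm : ℂ → ℂ := fun z => if z = 0 then (m : ℂ) * g 0 else (f^[m] z - z) / z ^ k with hGm
    have hGg : Gm =ᶠ[𝓝 (0:ℂ)] gm := by
      filter_upwards [hgmE] with z hz
      by_cases h : z = 0
      · subst h; simp [hGm, hgm0]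
      · simp only [hGm, if_neg h]
        rw [hz]
        field_simp
        ring
    have hGdiff : ∀ z ∈ ball (0:ℂ) ρ, DifferentiableAt ℂ Gm z := by
      intro z hz
      by_cases h : z = 0
      · subst h
        exact hGg.differentiableAt_iff.mpr hgma.differentiableAt
      · have hev : Gm =ᶠ[𝓝 z] fun y => (f^[m] y - y) / y ^ k := by
          filter_upwards [isOpen_compl_singleton.mem_nhds h] with y hy
          simp only [Set.mem_compl_iff, Set.mem_singleton_iff] at hy
          simp only [hGm]
          rw [if_neg hy]
        exact hev.differentiableAt_iff.mpr
          (((hiter_diff m z hz).sub differentiableAt_id).div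
            (differentiableAt_pow k) (pow_ne_zero k h))
    have hball : closedBall (0:ℂ) ρ' ⊆ ball (0:ℂ) ρ := closedBall_subset_ball hρ'ρ
    have hdc : DiffContOnCl ℂ Gm (ball (0:ℂ) ρ') := by
      apply DifferentiableOn.diffContOnCl
      rw [closure_ball (0:ℂ) (ne_of_gt hρ'0)]
      exact fun z hz => (hGdiff z (hball hz)).differentiableWithinAt
    have hfr : ∀ z ∈ frontier (ball (0:ℂ) ρ'), ‖Gm z‖ ≤ C := by
      intro z hz
      rw [frontier_ball (0:ℂ) (ne_of_gt hρ'0)] at hz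
      have hzn : ‖z‖ = ρ' := by
        have := mem_sphere.mp hz
        rwa [dist_zero_right] at this
      have hz0 : z ≠ 0 := by
        intro h; rw [h] at hzn; simp at hzn; linarith
      have hzball : z ∈ ball (0:ℂ) ρ := by
        rw [mem_ball, dist_zero_right, hzn]; exact hρ'ρ
      have h1 : ‖f^[m] z - z‖ ≤ r + r := by
        have h2 : ‖f^[m] z‖ ≤ r := by
          have := horbit z hzball m
          rwa [mem_closedBall, dist_zero_right] at this
        calc ‖f^[m] z - z‖ ≤ ‖f^[m] z‖ + ‖z‖ := norm_sub_le _ _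
        _ ≤ r + r := by rw [hzn]; have : ρ' ≤ r := le_trans (le_of_lt hρ'ρ) hρr; linarith
      simp only [hGm]
      rw [if_neg hz0, norm_div, norm_pow, hzn, hC]
      gcongr
    have h0mem : (0:ℂ) ∈ closure (ball (0:ℂ) ρ') := by
      rw [closure_ball (0:ℂ) (ne_of_gt hρ'0)]
      exact mem_closedBall_self (le_of_lt hρ'0)
    have hmax := Complex.norm_le_of_forall_mem_frontier_norm_le
      isBounded_ball hdc hfr h0mem
    have hG0 : ‖Gm 0‖ = (m : ℝ) * ‖g 0‖ := by
      simp [hGm]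
    rwa [hG0] at hmax
  have hgpos : 0 < ‖g 0‖ := norm_pos_iff.mpr hg0
  obtain ⟨m, hm⟩ := exists_nat_gt (C / ‖g 0‖)
  have h1 : C < (m : ℝ) * ‖g 0‖ := (div_lt_iff₀ hgpos).mp hm
  have h2 := hbound m
  linarith

lemma list_prod_pow_eq_one {N : ℕ} : ∀ l : List ℂ, (∀ x ∈ l, x ^ N = 1) → (l.prod) ^ N = 1 := by
  intro l
  induction l with
  | nil => simp
  | cons x l ih =>
    intro h
    rw [List.prod_cons, mul_pow, h x List.mem_cons_self, one_mul,
      ih (fun y hy => h y (List.mem_cons_of_mem x hy))]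

lemma foldr_props (G : GermGroup) : ∀ l : List (ℂ → ℂ), (∀ t ∈ l, t ∈ G.carrier) →
    AnalyticAt ℂ (l.foldr (· ∘ ·) id) 0 ∧ (l.foldr (· ∘ ·) id) 0 = 0 ∧
    deriv (l.foldr (· ∘ ·) id) 0 = (l.map (fun t => deriv t 0)).prod := by
  intro l
  induction l with
  | nil => intro _; exact ⟨analyticAt_id, rfl, by simp⟩
  | cons t l ih =>
    intro hmem
    obtain ⟨ha, h0, hd⟩ := ih (fun s hs => hmem s (List.mem_cons_of_mem t hs))
    have htG : t ∈ G.carrier := hmem t List.mem_cons_self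
    have hta : AnalyticAt ℂ t 0 := G.analytic t htG
    have ht0 : t 0 = 0 := G.fixes_zero t htG
    have hfoldr : (t :: l).foldr (· ∘ ·) id = t ∘ (l.foldr (· ∘ ·) id) := rfl
    refine ⟨?_, ?_, ?_⟩
    · rw [hfoldr]
      have hta' : AnalyticAt ℂ t ((l.foldr (· ∘ ·) id) 0) := by rw [h0]; exact hta
      exact hta'.comp ha
    · rw [hfoldr]
      simp only [Function.comp_apply, h0, ht0]
    · rw [hfoldr, deriv_comp 0 (by rw [h0]; exact hta.differentiableAt) ha.differentiableAt,
        h0, hd]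
      simp only [List.map_cons, List.prod_cons]

lemma germ_eq_of_deriv_eq (G : GermGroup) (hst : LStableSet G.carrier)
    (H : Set (ℂ → ℂ)) (hHG : H ⊆ G.carrier)
    (hcomp : ∀ f ∈ H, ∀ g ∈ H, f ∘ g ∈ H)
    (hinv : ∀ f ∈ H, ∃ g ∈ H,
      (∀ᶠ z in 𝓝 (0:ℂ), g (f z) = z) ∧ (∀ᶠ z in 𝓝 (0:ℂ), f (g z) = z))
    {f g : ℂ → ℂ} (hf : f ∈ H) (hg : g ∈ H) (hd : deriv f 0 = deriv g 0) :
    f =ᶠ[𝓝 (0:ℂ)] g := by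
  obtain ⟨g', hg'H, hL, hR⟩ := hinv g hg
  have hgG := hHG hg
  have hg'G := hHG hg'H
  have hfG := hHG hf
  have hg'0 : g' 0 = 0 := G.fixes_zero g' hg'G
  have hg0 : g 0 = 0 := G.fixes_zero g hgG
  have hcd : deriv g' 0 * deriv g 0 = 1 := by
    have h1 : deriv (fun z => g' (g z)) 0 = deriv g' (g 0) * deriv g 0 :=
      deriv_comp 0 (by rw [hg0]; exact (G.analytic g' hg'G).differentiableAt)
        (G.analytic g hgG).differentiableAt
    have h2 : (fun z => g' (g z)) =ᶠ[𝓝 (0:ℂ)] id := hL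
    have h3 : deriv (fun z => g' (g z)) 0 = 1 := by rw [h2.deriv_eq]; simp
    rw [h1, hg0] at h3
    exact h3
  have hfg'H : f ∘ g' ∈ H := hcomp f hf g' hg'H
  have hfg'G := hHG hfg'H
  have hderiv1 : deriv (f ∘ g') 0 = 1 := by
    rw [deriv_comp 0 (by rw [hg'0]; exact (G.analytic f hfG).differentiableAt)
      (G.analytic g' hg'G).differentiableAt, hg'0, hd, mul_comm]
    exact hcd
  have hkey := eventually_eq_id_of_deriv_one hst hfg'G (G.analytic _ hfg'G)
    (G.fixes_zero _ hfg'G) hderiv1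
  have hkey' : ∀ᶠ w in 𝓝 (0:ℂ), f (g' w) = w := hkey
  have htg : Filter.Tendsto g (𝓝 (0:ℂ)) (𝓝 (0:ℂ)) := by
    have := (G.analytic g hgG).continuousAt.tendsto
    rwa [hg0] at this
  have hE : ∀ᶠ z in 𝓝 (0:ℂ), f (g' (g z)) = g z := htg.eventually hkey'
  filter_upwards [hE, hL] with z h1 h2
  rwa [h2] at h1

/-- in a finitely generated `L`-stable subgroup `G ⊆ Diff(ℂ,0)`, every
finitely generated subgroup `H ⊆ G` all of whose elements are resonant is finite. -/
theorem resonant_subgroup_finite (G : GermGroup)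
    (hfg : G.FinitelyGenerated) (hst : LStableSet G.carrier)
    (H : Set (ℂ → ℂ)) (hHG : H ⊆ G.carrier)
    (hid : id ∈ H) (hcomp : ∀ f ∈ H, ∀ g ∈ H, f ∘ g ∈ H)
    (hinv : ∀ f ∈ H, ∃ g ∈ H,
      (∀ᶠ z in 𝓝 (0:ℂ), g (f z) = z) ∧ (∀ᶠ z in 𝓝 (0:ℂ), f (g z) = z))
    (hHfg : ∃ T : Set (ℂ → ℂ), T.Finite ∧ T ⊆ H ∧
      ∀ f ∈ H, ∃ l : List (ℂ → ℂ), (∀ g ∈ l, g ∈ T) ∧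
        f =ᶠ[𝓝 (0:ℂ)] l.foldr (· ∘ ·) id)
    (hres : ∀ f ∈ H, ∃ n : ℕ, 0 < n ∧ (deriv f 0) ^ n = 1) :
    GermFinite H := by
  obtain ⟨T, hTfin, hTH, hTgen⟩ := hHfg
  have hchoice : ∀ t : ℂ → ℂ, ∃ m : ℕ, 0 < m ∧ (t ∈ T → (deriv t 0) ^ m = 1) := by
    intro t
    by_cases ht : t ∈ T
    · obtain ⟨m, hm1, hm2⟩ := hres t (hTH ht)
      exact ⟨m, hm1, fun _ => hm2⟩
    · exact ⟨1, one_pos, fun h => absurd h ht⟩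
  choose n hn1 hn2 using hchoice
  set N := ∏ t ∈ hTfin.toFinset, n t with hN
  have hN0 : 0 < N := Finset.prod_pos (fun t _ => hn1 t)
  have hTN : ∀ t ∈ T, (deriv t 0) ^ N = 1 := by
    intro t ht
    obtain ⟨c, hc⟩ := Finset.dvd_prod_of_mem n (hTfin.mem_toFinset.mpr ht)
    rw [hN, hc, pow_mul, hn2 t ht, one_pow]
  have hHN : ∀ f ∈ H, (deriv f 0) ^ N = 1 := by
    intro f hf
    obtain ⟨l, hl, hfl⟩ := hTgen f hf
    have hlG : ∀ t ∈ l, t ∈ G.carrier := fun t ht => hHG (hTH (hl t ht))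
    obtain ⟨_, _, hd⟩ := foldr_props G l hlG
    rw [hfl.deriv_eq, hd]
    apply list_prod_pow_eq_one
    intro x hx
    simp only [List.mem_map] at hx
    obtain ⟨t, ht, rfl⟩ := hx
    exact hTN t (hl t ht)
  have hRfin : Set.Finite {z : ℂ | z ^ N = 1} := by
    have hsub : {z : ℂ | z ^ N = 1} ⊆ ↑(Polynomial.nthRoots N (1:ℂ)).toFinset := by
      intro z hz
      simp only [Finset.coe_sort_coe, Multiset.mem_toFinset, Finset.mem_coe]
      rw [Polynomial.mem_nthRoots hN0]
      exact hz
    exact Set.Finite.subset (Finset.finite_toSet _) hsub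
  have hrep : ∀ z : ℂ, ∃ fz : ℂ → ℂ, (∃ f ∈ H, deriv f 0 = z) → (fz ∈ H ∧ deriv fz 0 = z) := by
    intro z
    by_cases h : ∃ f ∈ H, deriv f 0 = z
    · obtain ⟨f, hfH, hfd⟩ := h
      exact ⟨f, fun _ => ⟨hfH, hfd⟩⟩
    · exact ⟨id, fun hh => absurd hh h⟩
  choose rep hrepspec using hrep
  refine ⟨rep '' {z : ℂ | z ^ N = 1}, hRfin.image rep, ?_⟩
  intro f hf
  have hz : deriv f 0 ∈ {z : ℂ | z ^ N = 1} := hHN f hf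
  refine ⟨rep (deriv f 0), Set.mem_image_of_mem rep hz, ?_⟩
  obtain ⟨hrH, hrd⟩ := hrepspec (deriv f 0) ⟨f, hf, rfl⟩
  exact germ_eq_of_deriv_eq G hst H hHG hcomp hinv hf hrH hrd.symm
end
end

section
/- Let G ⊆ Diff(ℂ,0) be a group of germs all of whose elements are periodic and which is abelian. Then G is isomorphic to a subgroup of the group of roots of unity; in particular, if G is finitely generated then G is finite cyclic. -/
open Filter Topology

noncomputable section

lemma myDerivComp {f g : ℂ → ℂ} (hf : AnalyticAt ℂ f 0) (hg : AnalyticAt ℂ g 0)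
    (hg0 : g 0 = 0) : deriv (f ∘ g) 0 = deriv f 0 * deriv g 0 := by
  have h1 : DifferentiableAt ℂ f (g 0) := by rw [hg0]; exact hf.differentiableAt
  have := deriv_comp (x := 0) h1 hg.differentiableAt
  rwa [hg0] at this

lemma iterProps {f : ℂ → ℂ} (hf : AnalyticAt ℂ f 0) (h0 : f 0 = 0) (n : ℕ) :
    AnalyticAt ℂ f^[n] 0 ∧ f^[n] 0 = 0 ∧ deriv f^[n] 0 = (deriv f 0) ^ n := by
  induction n with
  | zero =>
    refine ⟨?_, rfl, ?_⟩
    · simpa [Function.iterate_zero] using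
        (analyticAt_id : AnalyticAt ℂ (_root_.id : ℂ → ℂ) (0 : ℂ))
    · simp [Function.iterate_zero]
  | succ n ih =>
    obtain ⟨ha, hz, hd⟩ := ih
    rw [Function.iterate_succ']
    have hfz : AnalyticAt ℂ f (f^[n] 0) := by rw [hz]; exact hf
    refine ⟨hfz.comp ha, by simp [Function.comp, hz, h0], ?_⟩
    rw [myDerivComp hf ha hz, hd, pow_succ]; ring

lemma eq_id_of_mult_one {f : ℂ → ℂ} (hf : AnalyticAt ℂ f 0) (h0 : f 0 = 0)
    (hd : deriv f 0 = 1) {m : ℕ} (hm : 0 < m) (hp : f^[m] =ᶠ[𝓝 (0:ℂ)] id) :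
    f =ᶠ[𝓝 (0:ℂ)] id := by
  set h : ℂ → ℂ := fun z => ∑ j ∈ Finset.range m, f^[j] z with hhdef
  have hA : ∀ j, AnalyticAt ℂ f^[j] 0 := fun j => (iterProps hf h0 j).1
  have hAh : AnalyticAt ℂ h 0 := Finset.analyticAt_fun_sum _ (fun j _ => hA j)
  have hdh : deriv h 0 = (m : ℂ) := by
    rw [hhdef, deriv_fun_sum (fun j _ => (hA j).differentiableAt)]
    have : ∀ j ∈ Finset.range m, deriv f^[j] 0 = 1 := by
      intro j _; rw [(iterProps hf h0 j).2.2, hd, one_pow]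
    rw [Finset.sum_congr rfl this, Finset.sum_const, Finset.card_range]; simp
  have hne : deriv h 0 ≠ 0 := by
    rw [hdh]; exact_mod_cast Nat.cast_ne_zero.mpr hm.ne'
  have hs : HasStrictDerivAt h (deriv h 0) 0 := by
    obtain ⟨p, hpp⟩ := hAh
    rw [hpp.deriv]; exact hpp.hasStrictDerivAt
  have hsf := hs.hasStrictFDerivAt_equiv hne
  have hleft := hsf.eventually_left_inverse
  have hshift : ∀ᶠ z in 𝓝 (0:ℂ), h (f z) = h z := by
    filter_upwards [hp] with z hz
    have e1 : h (f z) = ∑ j ∈ Finset.range m, f^[j+1] z := by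
      rw [hhdef]
      exact Finset.sum_congr rfl fun j _ => (Function.iterate_succ_apply f j z).symm
    have e2 : ∑ j ∈ Finset.range m, f^[j+1] z
        = (∑ j ∈ Finset.range m, f^[j] z) + f^[m] z - f^[0] z := by
      have a := Finset.sum_range_succ (fun j => f^[j] z) m
      have b := Finset.sum_range_succ' (fun j => f^[j] z) m
      rw [a] at b
      linear_combination -b
    rw [e1, e2, hz]
    simp [hhdef]
  have hft : Tendsto f (𝓝 (0:ℂ)) (𝓝 (0:ℂ)) := by
    simpa [h0] using hf.continuousAt.tendsto
  have hcomp : ∀ᶠ z in 𝓝 (0:ℂ), hsf.localInverse h _ 0 (h (f z)) = f z :=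
    hft.eventually hleft
  filter_upwards [hleft, hcomp, hshift] with z h1 h2 h3
  simp only [id_eq]
  rw [← h2, h3, h1]

/-- The group of multipliers of a germ group, as a subgroup of `ℂˣ`. -/
def GermGroup.multGroup (G : GermGroup) : Subgroup ℂˣ where
  carrier := {u : ℂˣ | ∃ f ∈ G.carrier, deriv f 0 = (u : ℂ)}
  one_mem' := ⟨id, G.id_mem, by simp⟩
  mul_mem' := by
    rintro a b ⟨f, hf, hfa⟩ ⟨g, hg, hgb⟩
    refine ⟨f ∘ g, G.comp_mem f hf g hg, ?_⟩
    rw [myDerivComp (G.analytic f hf) (G.analytic g hg) (G.fixes_zero g hg), hfa, hgb]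
    simp
  inv_mem' := by
    rintro a ⟨g, hg, hga⟩
    obtain ⟨k, hk, hkg, hgk⟩ := G.inv_mem g hg
    refine ⟨k, hk, ?_⟩
    have h1 : (k ∘ g) =ᶠ[𝓝 (0:ℂ)] id := by
      filter_upwards [hkg] with z hz; simpa using hz
    have h2 := h1.deriv_eq
    rw [myDerivComp (G.analytic k hk) (G.analytic g hg) (G.fixes_zero g hg)] at h2
    simp only [deriv_id] at h2
    rw [Units.val_inv_eq_inv_val, ← hga]
    exact eq_inv_of_mul_eq_one_left h2

lemma GermGroup.mem_multGroup (G : GermGroup) (u : ℂˣ) :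
    u ∈ G.multGroup ↔ ∃ f ∈ G.carrier, deriv f 0 = (u : ℂ) := Iff.rfl

/-- an abelian group of periodic germs in `Diff(ℂ,0)` embeds, via the
derivative homomorphism `f ↦ f'(0)`, into the group of roots of unity (the multiplier
is a root of unity and determines the element); in particular a finitely generated such
group is finite cyclic. -/
theorem abelian_periodic_group_embeds_in_roots_of_unity (G : GermGroup)
    (hper : ∀ f ∈ G.carrier, ∃ m : ℕ, 0 < m ∧ f^[m] =ᶠ[𝓝 (0:ℂ)] id)
    (hab : ∀ f ∈ G.carrier, ∀ g ∈ G.carrier, f ∘ g =ᶠ[𝓝 (0:ℂ)] g ∘ f) :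
    ((∀ f ∈ G.carrier, ∃ n : ℕ, 0 < n ∧ (deriv f 0) ^ n = 1) ∧
     (∀ f ∈ G.carrier, ∀ g ∈ G.carrier, deriv f 0 = deriv g 0 → f =ᶠ[𝓝 (0:ℂ)] g)) ∧
    (G.FinitelyGenerated → GermFinite G.carrier ∧ GermCyclic G.carrier) := by
  classical
  have part1a : ∀ f ∈ G.carrier, ∃ n : ℕ, 0 < n ∧ (deriv f 0) ^ n = 1 := by
    intro f hf
    obtain ⟨m, hm, hev⟩ := hper f hf
    refine ⟨m, hm, ?_⟩
    have h1 := hev.deriv_eq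
    rw [(iterProps (G.analytic f hf) (G.fixes_zero f hf) m).2.2] at h1
    simpa using h1
  have inj : ∀ f ∈ G.carrier, ∀ g ∈ G.carrier, deriv f 0 = deriv g 0 →
      f =ᶠ[𝓝 (0:ℂ)] g := by
    intro f hf g hg hfg
    obtain ⟨k, hk, hkg, hgk⟩ := G.inv_mem g hg
    have hφ : k ∘ f ∈ G.carrier := G.comp_mem k hk f hf
    have hdk : deriv k 0 * deriv g 0 = 1 := by
      have h1 : (k ∘ g) =ᶠ[𝓝 (0:ℂ)] id := by
        filter_upwards [hkg] with z hz; simpa using hz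
      have h2 := h1.deriv_eq
      rw [myDerivComp (G.analytic k hk) (G.analytic g hg) (G.fixes_zero g hg)] at h2
      simpa using h2
    have hdφ : deriv (k ∘ f) 0 = 1 := by
      rw [myDerivComp (G.analytic k hk) (G.analytic f hf) (G.fixes_zero f hf), hfg]
      exact hdk
    obtain ⟨m, hm, hmev⟩ := hper _ hφ
    have hid : (k ∘ f) =ᶠ[𝓝 (0:ℂ)] id :=
      eq_id_of_mult_one (G.analytic _ hφ) (G.fixes_zero _ hφ) hdφ hm hmev
    have hft : Tendsto f (𝓝 (0:ℂ)) (𝓝 (0:ℂ)) := by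
      simpa [G.fixes_zero f hf] using (G.analytic f hf).continuousAt.tendsto
    have h3 : ∀ᶠ z in 𝓝 (0:ℂ), g (k (f z)) = f z := hft.eventually hgk
    filter_upwards [hid, h3] with z h1 h2
    have h1' : k (f z) = z := h1
    rw [← h2, h1']
  have iterMem : ∀ g ∈ G.carrier, ∀ n : ℕ, g^[n] ∈ G.carrier := by
    intro g hg n
    induction n with
    | zero => simpa [Function.iterate_zero] using G.id_mem
    | succ n ih => rw [Function.iterate_succ']; exact G.comp_mem g hg _ ih
  refine ⟨⟨part1a, inj⟩, ?_⟩
  rintro ⟨T, hTfin, hTsub, hgen⟩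
  set nf : (ℂ → ℂ) → ℕ := fun t =>
    if h : ∃ n : ℕ, 0 < n ∧ (deriv t 0) ^ n = 1 then h.choose else 1 with hnf
  have hnf_pos : ∀ t, 0 < nf t := by
    intro t; rw [hnf]; dsimp only
    by_cases h : ∃ n : ℕ, 0 < n ∧ (deriv t 0) ^ n = 1
    · rw [dif_pos h]; exact h.choose_spec.1
    · rw [dif_neg h]; exact one_pos
  have hnf_spec : ∀ t ∈ T, (deriv t 0) ^ (nf t) = 1 := by
    intro t ht
    have h : ∃ n : ℕ, 0 < n ∧ (deriv t 0) ^ n = 1 := part1a t (hTsub ht)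
    rw [hnf]; dsimp only; rw [dif_pos h]; exact h.choose_spec.2
  set N : ℕ := ∏ t ∈ hTfin.toFinset, nf t with hN
  have hNpos : 0 < N := Finset.prod_pos fun t _ => hnf_pos t
  have hTN : ∀ t ∈ T, (deriv t 0) ^ N = 1 := by
    intro t ht
    obtain ⟨c, hc⟩ := Finset.dvd_prod_of_mem nf (hTfin.mem_toFinset.mpr ht)
    rw [hN, hc, pow_mul, hnf_spec t ht, one_pow]
  have word : ∀ l : List (ℂ → ℂ), (∀ g ∈ l, g ∈ T) →
      AnalyticAt ℂ (l.foldr (· ∘ ·) id) 0 ∧ (l.foldr (· ∘ ·) id) 0 = 0 ∧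
        (deriv (l.foldr (· ∘ ·) id) 0) ^ N = 1 := by
    intro l
    induction l with
    | nil =>
      intro _
      refine ⟨?_, rfl, ?_⟩
      · simpa using (analyticAt_id : AnalyticAt ℂ (_root_.id : ℂ → ℂ) (0 : ℂ))
      · simp
    | cons g l ih =>
      intro hl
      have hg : g ∈ T := hl g List.mem_cons_self
      have hgc : g ∈ G.carrier := hTsub hg
      obtain ⟨ha, hz, hd⟩ := ih (fun x hx => hl x (List.mem_cons_of_mem _ hx))
      simp only [List.foldr_cons]
      have hga : AnalyticAt ℂ g ((l.foldr (· ∘ ·) id) 0) := by rw [hz]; exact G.analytic g hgc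
      refine ⟨hga.comp ha, by simp [Function.comp, hz, G.fixes_zero g hgc], ?_⟩
      rw [myDerivComp (G.analytic g hgc) ha hz, mul_pow, hd, hTN g hg, one_mul]
  have multN : ∀ f ∈ G.carrier, (deriv f 0) ^ N = 1 := by
    intro f hf
    obtain ⟨l, hl, hev⟩ := hgen f hf
    rw [hev.deriv_eq]
    exact (word l hl).2.2
  constructor
  · -- GermFinite
    have rootsFin : ({z : ℂ | z ^ N = 1}).Finite := by
      have hsub : {z : ℂ | z ^ N = 1} ⊆ ↑(Polynomial.nthRoots N (1:ℂ)).toFinset := by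
        intro z hz
        rw [Finset.mem_coe, Multiset.mem_toFinset, Polynomial.mem_nthRoots hNpos]
        exact hz
      exact Set.Finite.subset (Polynomial.nthRoots N (1:ℂ)).toFinset.finite_toSet hsub
    set rep : ℂ → (ℂ → ℂ) := fun z =>
      if h : ∃ f ∈ G.carrier, deriv f 0 = z then h.choose else id with hrep
    refine ⟨rep '' {z : ℂ | z ^ N = 1}, rootsFin.image rep, ?_⟩
    intro f hf
    have hz : deriv f 0 ∈ {z : ℂ | z ^ N = 1} := multN f hf
    have hex : ∃ g ∈ G.carrier, deriv g 0 = deriv f 0 := ⟨f, hf, rfl⟩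
    refine ⟨rep (deriv f 0), Set.mem_image_of_mem _ hz, ?_⟩
    have hprop : rep (deriv f 0) ∈ G.carrier ∧ deriv (rep (deriv f 0)) 0 = deriv f 0 := by
      rw [hrep]; dsimp only; rw [dif_pos hex]
      exact ⟨hex.choose_spec.1, hex.choose_spec.2⟩
    exact inj f hf _ hprop.1 hprop.2.symm
  · -- GermCyclic
    have hHsub : G.multGroup ≤ rootsOfUnity N ℂ := by
      intro u hu
      rw [mem_rootsOfUnity']
      obtain ⟨f, hf, hdf⟩ := (G.mem_multGroup u).mp hu
      rw [← hdf]; exact multN f hf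
    haveI : NeZero N := ⟨hNpos.ne'⟩
    haveI : Finite ↥(rootsOfUnity N ℂ) := inferInstance
    haveI : Finite (G.multGroup) := by
      refine Finite.of_injective
        (fun x : G.multGroup => (⟨x.1, hHsub x.2⟩ : rootsOfUnity N ℂ)) ?_
      intro a b hab
      have := congrArg (fun y : rootsOfUnity N ℂ => (y : ℂˣ)) hab
      exact Subtype.ext this
    haveI : IsCyclic (G.multGroup) := by
      refine isCyclic_of_subgroup_isDomain ((Units.coeHom ℂ).comp G.multGroup.subtype) ?_
      intro a b hab
      exact Subtype.ext (Units.ext hab)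
    obtain ⟨u, hu⟩ := IsCyclic.exists_generator (α := G.multGroup)
    obtain ⟨g0, hg0c, hg0d⟩ := u.2
    refine ⟨g0, hg0c, ?_⟩
    intro f hf
    have hfd : deriv f 0 ≠ 0 := G.deriv_ne f hf
    have hufH : Units.mk0 _ hfd ∈ G.multGroup := ⟨f, hf, rfl⟩
    have hpow : (⟨Units.mk0 _ hfd, hufH⟩ : G.multGroup) ∈ Submonoid.powers u :=
      mem_powers_iff_mem_zpowers.mpr (hu _)
    obtain ⟨n, hn⟩ := hpow
    refine ⟨n, ?_⟩
    have hval : deriv f 0 = (deriv g0 0) ^ n := by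
      have hc := congrArg (fun x : G.multGroup => ((x : ℂˣ) : ℂ)) hn
      simp only at hc
      rw [hg0d]
      push_cast at hc
      exact hc.symm
    have hiter := iterProps (G.analytic g0 hg0c) (G.fixes_zero g0 hg0c) n
    exact inj f hf _ (iterMem g0 hg0c n) (by rw [hiter.2.2, hval])
end
end

section
/- Let g: V → ℂ be a holomorphic function on a neighborhood V of 0 ∈ ℂ with g(0) = 0 and g not identically 0. Then the invariance group Inv(g) = { f ∈ Diff(ℂ,0) : g ∘ f = g } is a finite cyclic group. -/
open Filter Topology

noncomputable section

/-- The invariance group of a holomorphic germ `g`: all germs of holomorphic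
diffeomorphisms `f` fixing `0` with `g ∘ f = g` as germs at `0`. -/
def InvGroup (g : ℂ → ℂ) : Set (ℂ → ℂ) :=
  {f | AnalyticAt ℂ f 0 ∧ f 0 = 0 ∧ deriv f 0 ≠ 0 ∧ g ∘ f =ᶠ[𝓝 (0:ℂ)] g}

namespace InvGroupAux


lemma exists_factor {f : ℂ → ℂ} (hf : AnalyticAt ℂ f 0)
    (hne : ¬ f =ᶠ[𝓝 (0:ℂ)] fun _ => 0) :
    ∃ n : ℕ, ∃ w : ℂ → ℂ, AnalyticAt ℂ w 0 ∧ w 0 ≠ 0 ∧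
      ∀ᶠ z in 𝓝 (0:ℂ), f z = z ^ n * w z := by
  have hords : analyticOrderAt f 0 ≠ ⊤ := by
    intro h; exact hne ((analyticOrderAt_eq_top).mp h)
  obtain ⟨n, hn⟩ := ENat.ne_top_iff_exists.mp hords
  obtain ⟨w, hw, hw0, hfw⟩ := (hf.analyticOrderAt_eq_natCast (n := n)).mp hn.symm
  exact ⟨n, w, hw, hw0, hfw.mono fun z hz => by simpa [smul_eq_mul] using hz⟩

lemma deriv_factored {w : ℂ → ℂ} (hw : AnalyticAt ℂ w 0) {f : ℂ → ℂ} {n : ℕ} (hn : 1 ≤ n)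
    (hf : ∀ᶠ z in 𝓝 (0:ℂ), f z = z ^ n * w z) :
    deriv f 0 = if n = 1 then w 0 else 0 := by
  have h1 : HasDerivAt (fun z : ℂ => z ^ n * w z)
      ((n : ℂ) * 0 ^ (n - 1) * w 0 + 0 ^ n * deriv w 0) 0 :=
    (hasDerivAt_pow n 0).mul (hw.differentiableAt.hasDerivAt)
  have heq : f =ᶠ[𝓝 (0:ℂ)] fun z => z ^ n * w z := hf
  rw [heq.deriv_eq, h1.deriv]
  rcases eq_or_lt_of_le hn with h | h
  · simp [← h]
  · have h1 : n - 1 ≠ 0 := by omega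
    have h2 : n ≠ 0 := by omega
    simp [zero_pow h1, zero_pow h2, if_neg (by omega : ¬ n = 1)]

lemma exists_factor_one {f : ℂ → ℂ} (hf : AnalyticAt ℂ f 0) (h0 : f 0 = 0)
    (hd : deriv f 0 ≠ 0) :
    ∃ v, AnalyticAt ℂ v 0 ∧ v 0 = deriv f 0 ∧ ∀ᶠ z in 𝓝 (0:ℂ), f z = z * v z := by
  have hne : ¬ f =ᶠ[𝓝 (0:ℂ)] fun _ => 0 := by
    intro h; exact hd (by rw [h.deriv_eq]; simp)
  obtain ⟨n, w, hw, hw0, hfw⟩ := exists_factor hf hne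
  have hval : f 0 = 0 ^ n * w 0 := Filter.EventuallyEq.eq_of_nhds hfw
  have hn1 : 1 ≤ n := by
    rcases Nat.eq_zero_or_pos n with h | h
    · exfalso; apply hw0; rw [h] at hval; simpa [h0] using hval.symm
    · exact h
  have hder := deriv_factored hw hn1 hfw
  have hn : n = 1 := by
    by_contra h
    rw [if_neg h] at hder
    exact hd hder
  subst hn
  exact ⟨w, hw, by simpa using hder.symm, by simpa using hfw⟩

lemma exists_factor_two {d : ℂ → ℂ} (hd : AnalyticAt ℂ d 0) (h0 : d 0 = 0)
    (h1 : deriv d 0 = 0) (hne : ¬ d =ᶠ[𝓝 (0:ℂ)] fun _ => 0) :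
    ∃ p : ℕ, 2 ≤ p ∧ ∃ w, AnalyticAt ℂ w 0 ∧ w 0 ≠ 0 ∧
      ∀ᶠ z in 𝓝 (0:ℂ), d z = z ^ p * w z := by
  obtain ⟨n, w, hw, hw0, hfw⟩ := exists_factor hd hne
  have hval : d 0 = 0 ^ n * w 0 := Filter.EventuallyEq.eq_of_nhds hfw
  have hn1 : 1 ≤ n := by
    rcases Nat.eq_zero_or_pos n with h | h
    · exfalso; apply hw0; rw [h] at hval; simpa [h0] using hval.symm
    · exact h
  have hder := deriv_factored hw hn1 hfw
  have hn : n ≠ 1 := by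
    intro h; rw [if_pos h] at hder; rw [hder] at h1; exact hw0 h1
  exact ⟨n, by omega, w, hw, hw0, hfw⟩

lemma exists_lip {u : ℂ → ℂ} (hu : AnalyticAt ℂ u 0) :
    ∃ K : ℝ, 0 ≤ K ∧ ∃ t ∈ 𝓝 (0:ℂ), ∀ a ∈ t, ∀ b ∈ t, ‖u a - u b‖ ≤ K * ‖a - b‖ := by
  obtain ⟨K, t, ht, hK⟩ := (hu.contDiffAt (n := 1)).exists_lipschitzOnWith
  refine ⟨K, K.coe_nonneg, t, ht, fun a ha b hb => ?_⟩
  have := hK.dist_le_mul a ha b hb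
  simpa [dist_eq_norm] using this

lemma tendsto_zero {f : ℂ → ℂ} (hf : AnalyticAt ℂ f 0) (h0 : f 0 = 0) :
    Tendsto f (𝓝 (0:ℂ)) (𝓝 (0:ℂ)) := by
  have := hf.continuousAt; rwa [ContinuousAt, h0] at this

lemma determinacy {k : ℕ} (hk : 1 ≤ k) {u f r : ℂ → ℂ}
    (hu : AnalyticAt ℂ u 0) (hu0 : u 0 ≠ 0)
    (hfa : AnalyticAt ℂ f 0) (hf0 : f 0 = 0)
    (hra : AnalyticAt ℂ r 0) (hr0 : r 0 = 0) (hrd : deriv r 0 ≠ 0)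
    (hder : deriv f 0 = deriv r 0)
    (heq : ∀ᶠ z in 𝓝 (0:ℂ), f z ^ k * u (f z) = r z ^ k * u (r z)) :
    f =ᶠ[𝓝 (0:ℂ)] r := by
  by_contra hcon
  set d : ℂ → ℂ := fun z => f z - r z with hd_def
  have hda : AnalyticAt ℂ d 0 := hfa.sub hra
  have hd0 : d 0 = 0 := by simp [hd_def, hf0, hr0]
  have hdd : deriv d 0 = 0 := by
    have : deriv d 0 = deriv f 0 - deriv r 0 :=
      deriv_sub hfa.differentiableAt hra.differentiableAt
    rw [this, hder, sub_self]
  have hdne : ¬ d =ᶠ[𝓝 (0:ℂ)] fun _ => 0 := by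
    intro h; exact hcon (h.mono fun z hz => sub_eq_zero.mp hz)
  obtain ⟨p, hp2, w, hwa, hw0, hdw⟩ := exists_factor_two hda hd0 hdd hdne
  have hfd : deriv f 0 ≠ 0 := hder ▸ hrd
  obtain ⟨vf, hvfa, hvf0, hfv⟩ := exists_factor_one hfa hf0 hfd
  obtain ⟨vr, hvra, hvr0, hrv⟩ := exists_factor_one hra hr0 hrd
  obtain ⟨K, hKnn, t, ht, hKlip⟩ := exists_lip hu
  have hft : Tendsto f (𝓝 (0:ℂ)) (𝓝 (0:ℂ)) := tendsto_zero hfa hf0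
  have hrt : Tendsto r (𝓝 (0:ℂ)) (𝓝 (0:ℂ)) := tendsto_zero hra hr0
  set T : ℂ → ℂ := fun z => ∑ i ∈ Finset.range k, vf z ^ i * vr z ^ (k - 1 - i) with hT_def
  have hufa : AnalyticAt ℂ (fun z => u (f z)) 0 :=
    (show AnalyticAt ℂ u (f 0) from hf0.symm ▸ hu).comp hfa
  set A : ℂ → ℂ := fun z => w z * (T z * u (f z)) with hA_def
  have hTa : AnalyticAt ℂ T 0 :=
    Finset.analyticAt_fun_sum _ fun i _ => (hvfa.pow i).mul (hvra.pow _)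
  have hAa : AnalyticAt ℂ A 0 := hwa.mul (hTa.mul hufa)
  set ζ := deriv r 0 with hζ
  have hT0 : T 0 = (k : ℂ) * ζ ^ (k - 1) := by
    have : ∀ i ∈ Finset.range k, vf 0 ^ i * vr 0 ^ (k - 1 - i) = ζ ^ (k - 1) := by
      intro i hi
      rw [hvf0, hvr0, hder, ← pow_add]
      congr 1
      have := Finset.mem_range.mp hi
      omega
    simp only [hT_def]
    rw [Finset.sum_congr rfl this, Finset.sum_const, Finset.card_range, nsmul_eq_mul]
  have hA0 : A 0 = w 0 * ((k : ℂ) * ζ ^ (k - 1) * u 0) := by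
    simp only [hA_def, hT0, hf0]
    try ring
  have hA0ne : A 0 ≠ 0 := by
    rw [hA0]
    exact mul_ne_zero hw0 (mul_ne_zero (mul_ne_zero
      (Nat.cast_ne_zero.mpr (by omega)) (pow_ne_zero _ hrd)) hu0)
  -- key identity
  have key : ∀ᶠ z in 𝓝 (0:ℂ), z ^ (p + k - 1) * A z
      = -(r z ^ k * (u (f z) - u (r z))) := by
    filter_upwards [heq, hdw, hfv, hrv] with z h1 h2 h3 h4
    have hsum : z ^ (k - 1) * T z
        = ∑ i ∈ Finset.range k, f z ^ i * r z ^ (k - 1 - i) := by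
      rw [hT_def, Finset.mul_sum]
      refine Finset.sum_congr rfl fun i hi => ?_
      rw [h3, h4, mul_pow, mul_pow]
      have hik : i + (k - 1 - i) = k - 1 := by
        have := Finset.mem_range.mp hi; omega
      calc z ^ (k-1) * (vf z ^ i * vr z ^ (k-1-i))
          = (z ^ i * z ^ (k-1-i)) * (vf z ^ i * vr z ^ (k-1-i)) := by
            rw [← pow_add, hik]
        _ = z ^ i * vf z ^ i * (z ^ (k-1-i) * vr z ^ (k-1-i)) := by ring
    have hgeom := geom_sum₂_mul (f z) (r z) k
    have hpk : z ^ (p + k - 1) = z ^ p * z ^ (k - 1) := by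
      rw [← pow_add]; congr 1; omega
    calc z ^ (p + k - 1) * A z
        = (z ^ p * w z) * ((z ^ (k-1) * T z) * u (f z)) := by
          rw [hpk, hA_def]; ring
      _ = (f z - r z) * ((∑ i ∈ Finset.range k, f z ^ i * r z ^ (k-1-i)) * u (f z)) := by
          rw [hsum, ← h2]
      _ = (f z ^ k - r z ^ k) * u (f z) := by rw [← hgeom]; ring
      _ = -(r z ^ k * (u (f z) - u (r z))) := by
          rw [sub_mul, h1]; ring
  -- eventual bounds
  set Cw : ℝ := ‖w 0‖ + 1 with hCw_def
  set Cr : ℝ := ‖vr 0‖ + 1 with hCr_def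
  have hCrnn : 0 ≤ Cr := by positivity
  have hwb : ∀ᶠ z in 𝓝 (0:ℂ), ‖w z‖ ≤ Cw :=
    (hwa.continuousAt.norm.tendsto).eventually_le_const (by simp [hCw_def])
  have hvrb : ∀ᶠ z in 𝓝 (0:ℂ), ‖vr z‖ ≤ Cr :=
    (hvra.continuousAt.norm.tendsto).eventually_le_const (by simp [hCr_def])
  have hdb : ∀ᶠ z in 𝓝 (0:ℂ), ‖d z‖ ≤ Cw * ‖z‖ ^ p := by
    filter_upwards [hdw, hwb] with z h1 h2
    rw [h1, norm_mul, norm_pow, mul_comm]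
    exact mul_le_mul_of_nonneg_right h2 (by positivity)
  have hrb : ∀ᶠ z in 𝓝 (0:ℂ), ‖r z‖ ≤ Cr * ‖z‖ := by
    filter_upwards [hrv, hvrb] with z h1 h2
    rw [h1, norm_mul, mul_comm]
    exact mul_le_mul_of_nonneg_right h2 (norm_nonneg _)
  have hfmem : ∀ᶠ z in 𝓝 (0:ℂ), f z ∈ t := hft ht
  have hrmem : ∀ᶠ z in 𝓝 (0:ℂ), r z ∈ t := hrt ht
  set C : ℝ := Cr ^ k * (K * Cw) with hC_def
  have hbound : ∀ᶠ z in 𝓝[≠] (0:ℂ), ‖A z‖ ≤ C * ‖z‖ := by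
    rw [eventually_nhdsWithin_iff]
    filter_upwards [key, hdb, hrb, hfmem, hrmem] with z hkey hdz hrz hfm hrm hz
    have hz' : z ≠ 0 := by simpa using hz
    have h1 : ‖z‖ ^ (p + k - 1) * ‖A z‖ = ‖r z ^ k * (u (f z) - u (r z))‖ := by
      rw [← norm_pow, ← norm_mul, hkey, norm_neg]
    have h2 : ‖r z ^ k * (u (f z) - u (r z))‖ ≤ (Cr * ‖z‖) ^ k * (K * (Cw * ‖z‖ ^ p)) := by
      rw [norm_mul, norm_pow]
      have hlip : ‖u (f z) - u (r z)‖ ≤ K * (Cw * ‖z‖ ^ p) := by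
        refine (hKlip _ hfm _ hrm).trans ?_
        exact mul_le_mul_of_nonneg_left hdz hKnn
      gcongr
    have h3 : (Cr * ‖z‖) ^ k * (K * (Cw * ‖z‖ ^ p)) = ‖z‖ ^ (p + k - 1) * (C * ‖z‖) := by
      have hzz : ‖z‖ ^ k * ‖z‖ ^ p = ‖z‖ ^ (p + k - 1) * ‖z‖ := by
        rw [← pow_add, ← pow_succ]; congr 1; omega
      rw [mul_pow, hC_def]
      calc Cr ^ k * ‖z‖ ^ k * (K * (Cw * ‖z‖ ^ p))
          = (Cr ^ k * (K * Cw)) * (‖z‖ ^ k * ‖z‖ ^ p) := by ring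
        _ = (Cr ^ k * (K * Cw)) * (‖z‖ ^ (p + k - 1) * ‖z‖) := by rw [hzz]
        _ = ‖z‖ ^ (p + k - 1) * (Cr ^ k * (K * Cw) * ‖z‖) := by ring
    have hzpos : (0:ℝ) < ‖z‖ ^ (p + k - 1) := pow_pos (norm_pos_iff.mpr hz') _
    have := h1 ▸ (h2.trans_eq h3)
    exact le_of_mul_le_mul_left this hzpos
  have htend0 : Tendsto A (𝓝[≠] (0:ℂ)) (𝓝 0) := by
    apply squeeze_zero_norm' hbound
    have : Tendsto (fun z : ℂ => C * ‖z‖) (𝓝 0) (𝓝 (C * ‖(0:ℂ)‖)) :=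
      tendsto_const_nhds.mul (continuous_norm.tendsto 0)
    simpa using this.mono_left nhdsWithin_le_nhds
  have htendA : Tendsto A (𝓝[≠] (0:ℂ)) (𝓝 (A 0)) :=
    hAa.continuousAt.tendsto.mono_left nhdsWithin_le_nhds
  exact hA0ne (tendsto_nhds_unique htendA htend0)


end InvGroupAux

namespace InvGroupAux

lemma root_of_unity {k : ℕ} (hk : 1 ≤ k) {u f : ℂ → ℂ}
    (hu : AnalyticAt ℂ u 0) (hu0 : u 0 ≠ 0)
    (hfa : AnalyticAt ℂ f 0) (hf0 : f 0 = 0) (hfd : deriv f 0 ≠ 0)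
    (heq : ∀ᶠ z in 𝓝 (0:ℂ), f z ^ k * u (f z) = z ^ k * u z) :
    deriv f 0 ^ k = 1 := by
  obtain ⟨vf, hvfa, hvf0, hfv⟩ := exists_factor_one hfa hf0 hfd
  set B : ℂ → ℂ := fun z => vf z ^ k * u (f z) - u z with hB
  have hft : Tendsto f (𝓝 (0:ℂ)) (𝓝 (0:ℂ)) := tendsto_zero hfa hf0
  have hufc : ContinuousAt (fun z => u (f z)) 0 :=
    (show ContinuousAt u (f 0) from hf0.symm ▸ hu.continuousAt).comp hfa.continuousAt
  have hBc : ContinuousAt B 0 :=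
    (((hvfa.continuousAt.pow k).mul hufc).sub hu.continuousAt)
  have hBev : ∀ᶠ z in 𝓝[≠] (0:ℂ), B z = 0 := by
    rw [eventually_nhdsWithin_iff]
    filter_upwards [heq, hfv] with z h1 h2 hz
    have hz' : z ≠ 0 := by simpa using hz
    have hzB : z ^ k * B z = 0 := by
      simp only [hB]
      rw [mul_sub]
      have h3 : z ^ k * (vf z ^ k * u (f z)) = f z ^ k * u (f z) := by
        rw [h2, mul_pow]; ring
      rw [h3, h1]; ring
    exact (mul_eq_zero.mp hzB).resolve_left (pow_ne_zero k hz')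
  have hB0 : B 0 = 0 := by
    have t1 : Tendsto B (𝓝[≠] (0:ℂ)) (𝓝 (B 0)) :=
      hBc.tendsto.mono_left nhdsWithin_le_nhds
    have t2 : Tendsto B (𝓝[≠] (0:ℂ)) (𝓝 0) :=
      Tendsto.congr' (Filter.EventuallyEq.symm hBev) tendsto_const_nhds
    exact tendsto_nhds_unique t1 t2
  have : (deriv f 0 ^ k - 1) * u 0 = 0 := by
    have hB0' : vf 0 ^ k * u (f 0) - u 0 = 0 := hB0
    rw [hvf0, hf0] at hB0'
    linear_combination hB0'
  have h4 := (mul_eq_zero.mp this).resolve_right hu0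
  exact sub_eq_zero.mp h4

lemma id_mem_invGroup (g : ℂ → ℂ) : id ∈ InvGroup g := by
  refine ⟨analyticAt_id, rfl, ?_, ?_⟩
  · simp
  · rw [Function.comp_id]

lemma comp_mem_invGroup {g f r : ℂ → ℂ} (hf : f ∈ InvGroup g) (hr : r ∈ InvGroup g) :
    f ∘ r ∈ InvGroup g ∧ deriv (f ∘ r) 0 = deriv f 0 * deriv r 0 := by
  obtain ⟨hfa, hf0, hfd, hfg⟩ := hf
  obtain ⟨hra, hr0, hrd, hrg⟩ := hr
  have hrt : Tendsto r (𝓝 (0:ℂ)) (𝓝 (0:ℂ)) := tendsto_zero hra hr0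
  have hfa' : AnalyticAt ℂ f (r 0) := hr0.symm ▸ hfa
  have hca : AnalyticAt ℂ (f ∘ r) 0 := hfa'.comp hra
  have hd : deriv (f ∘ r) 0 = deriv f (r 0) * deriv r 0 :=
    deriv_comp (x := 0) (hr0.symm ▸ hfa.differentiableAt) hra.differentiableAt
  rw [hr0] at hd
  refine ⟨⟨hca, ?_, ?_, ?_⟩, hd⟩
  · simp [Function.comp_apply, hr0, hf0]
  · rw [hd]; exact mul_ne_zero hfd hrd
  · exact (hfg.comp_tendsto hrt).trans hrg

lemma iterate_mem_invGroup {g f : ℂ → ℂ} (hf : f ∈ InvGroup g) (n : ℕ) :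
    f^[n] ∈ InvGroup g ∧ deriv f^[n] 0 = deriv f 0 ^ n := by
  induction n with
  | zero =>
    refine ⟨by simpa [Function.iterate_zero] using id_mem_invGroup g, ?_⟩
    simp
  | succ n ih =>
    rw [Function.iterate_succ']
    obtain ⟨h1, h2⟩ := comp_mem_invGroup hf ih.1
    refine ⟨h1, ?_⟩
    rw [h2, ih.2, pow_succ]; ring

lemma invGroup_eventuallyEq {g : ℂ → ℂ} {k : ℕ} (hk : 1 ≤ k) {u : ℂ → ℂ}
    (hu : AnalyticAt ℂ u 0) (hu0 : u 0 ≠ 0)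
    (hgu : ∀ᶠ z in 𝓝 (0:ℂ), g z = z ^ k * u z)
    {f r : ℂ → ℂ} (hf : f ∈ InvGroup g) (hr : r ∈ InvGroup g)
    (hder : deriv f 0 = deriv r 0) : f =ᶠ[𝓝 (0:ℂ)] r := by
  obtain ⟨hfa, hf0, hfd, hfg⟩ := hf
  obtain ⟨hra, hr0, hrd, hrg⟩ := hr
  apply determinacy hk hu hu0 hfa hf0 hra hr0 hrd hder
  have hft : Tendsto f (𝓝 (0:ℂ)) (𝓝 (0:ℂ)) := tendsto_zero hfa hf0
  have hrt : Tendsto r (𝓝 (0:ℂ)) (𝓝 (0:ℂ)) := tendsto_zero hra hr0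
  have hgu' : g =ᶠ[𝓝 (0:ℂ)] fun z => z ^ k * u z := hgu
  have e1 : (fun z => f z ^ k * u (f z)) =ᶠ[𝓝 (0:ℂ)] g ∘ f :=
    (hgu'.comp_tendsto hft).symm
  have e2 : g ∘ r =ᶠ[𝓝 (0:ℂ)] fun z => r z ^ k * u (r z) :=
    hgu'.comp_tendsto hrt
  exact ((e1.trans hfg).trans hrg.symm).trans e2

end InvGroupAux

open InvGroupAux

/-- for a holomorphic `g` with `g(0) = 0` and `g ≢ 0` near `0`, the
invariance group `Inv(g) = {f : g ∘ f = g}` is a finite cyclic group. -/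
theorem invariance_group_finite_cyclic (g : ℂ → ℂ)
    (hg : AnalyticAt ℂ g 0) (h0 : g 0 = 0)
    (hne : ¬ g =ᶠ[𝓝 (0:ℂ)] (fun _ => 0)) :
    GermFinite (InvGroup g) ∧ GermCyclic (InvGroup g) := by
  obtain ⟨k, u, hu, hu0, hgu⟩ := exists_factor hg hne
  have hk : 1 ≤ k := by
    rcases Nat.eq_zero_or_pos k with h | h
    · exfalso
      have hval : g 0 = 0 ^ k * u 0 := Filter.EventuallyEq.eq_of_nhds hgu
      rw [h] at hval; apply hu0; simpa [h0] using hval.symm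
    · exact h
  have hroot : ∀ f ∈ InvGroup g, deriv f 0 ^ k = 1 := by
    intro f hf
    obtain ⟨hfa, hf0, hfd, hfg⟩ := hf
    apply root_of_unity hk hu hu0 hfa hf0 hfd
    have hft : Tendsto f (𝓝 (0:ℂ)) (𝓝 (0:ℂ)) := tendsto_zero hfa hf0
    have hgu' : g =ᶠ[𝓝 (0:ℂ)] fun z => z ^ k * u z := hgu
    exact ((hgu'.comp_tendsto hft).symm.trans hfg).trans hgu'
  have hdet : ∀ f ∈ InvGroup g, ∀ r ∈ InvGroup g,
      deriv f 0 = deriv r 0 → f =ᶠ[𝓝 (0:ℂ)] r :=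
    fun f hf r hr h => invGroup_eventuallyEq hk hu hu0 hgu hf hr h
  -- the subgroup of multipliers
  set H : Subgroup ℂˣ :=
    { carrier := {x : ℂˣ | ∃ f ∈ InvGroup g, (x : ℂ) = deriv f 0}
      one_mem' := ⟨id, id_mem_invGroup g, by simp⟩
      mul_mem' := by
        rintro x y ⟨f, hf, hx⟩ ⟨r, hr, hy⟩
        exact ⟨f ∘ r, (comp_mem_invGroup hf hr).1,
          by rw [Units.val_mul, hx, hy, (comp_mem_invGroup hf hr).2]⟩
      inv_mem' := by
        rintro x ⟨f, hf, hx⟩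
        refine ⟨f^[k-1], (iterate_mem_invGroup hf (k-1)).1, ?_⟩
        rw [(iterate_mem_invGroup hf (k-1)).2, ← hx]
        have hxk : (x : ℂ) ^ k = 1 := by rw [hx]; exact hroot f hf
        have hmul : (x : ℂ) * (x : ℂ) ^ (k-1) = 1 := by
          rw [← pow_succ']
          have hkk : k - 1 + 1 = k := by omega
          rw [hkk]; exact hxk
        rw [Units.val_inv_eq_inv_val]
        exact inv_eq_of_mul_eq_one_right hmul } with hH_def
  have hmemH : ∀ x : ℂˣ, x ∈ H ↔ ∃ f ∈ InvGroup g, (x : ℂ) = deriv f 0 :=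
    fun x => Iff.rfl
  have hHle : H ≤ rootsOfUnity k ℂ := by
    rintro x ⟨f, hf, hx⟩
    rw [mem_rootsOfUnity]
    refine Units.ext ?_
    rw [Units.val_pow_eq_pow_val, hx]
    simpa using hroot f hf
  have hfin : Finite H := by
    haveI : NeZero k := ⟨by omega⟩
    have : Finite (rootsOfUnity k ℂ) := inferInstance
    exact Finite.of_injective (Subgroup.inclusion hHle) (Subgroup.inclusion_injective hHle)
  have hcycH : IsCyclic H := inferInstance
  obtain ⟨b, hb⟩ := IsCyclic.exists_generator (α := H)
  obtain ⟨f₀, hf₀, hbval⟩ := b.2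
  -- every f is germ-equal to an iterate of f₀
  have hcyc : ∀ f ∈ InvGroup g, ∃ n : ℕ, f =ᶠ[𝓝 (0:ℂ)] f₀^[n] := by
    intro f hf
    have hfd : deriv f 0 ≠ 0 := hf.2.2.1
    set x : ℂˣ := Units.mk0 (deriv f 0) hfd with hx_def
    have hxH : x ∈ H := ⟨f, hf, rfl⟩
    have hpow : (⟨x, hxH⟩ : H) ∈ Submonoid.powers b :=
      mem_powers_iff_mem_zpowers.mpr (hb ⟨x, hxH⟩)
    obtain ⟨n, hn⟩ := hpow
    refine ⟨n, hdet f hf _ (iterate_mem_invGroup hf₀ n).1 ?_⟩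
    rw [(iterate_mem_invGroup hf₀ n).2, ← hbval]
    have := congrArg (fun y : H => ((y : ℂˣ) : ℂ)) hn
    simpa [hx_def] using this.symm
  have hζ₀k : deriv f₀ 0 ^ k = 1 := hroot f₀ hf₀
  constructor
  · -- GermFinite
    refine ⟨(fun i => f₀^[i]) '' Set.Iio k, (Set.finite_Iio k).image _, ?_⟩
    intro f hf
    obtain ⟨n, hn⟩ := hcyc f hf
    refine ⟨f₀^[n % k], ⟨n % k, Nat.mod_lt n (by omega), rfl⟩, ?_⟩
    refine hn.trans (hdet _ (iterate_mem_invGroup hf₀ n).1 _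
      (iterate_mem_invGroup hf₀ (n % k)).1 ?_)
    rw [(iterate_mem_invGroup hf₀ n).2, (iterate_mem_invGroup hf₀ (n % k)).2]
    exact pow_eq_pow_mod n hζ₀k
  · exact ⟨f₀, hf₀, hcyc⟩
end
end
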